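/- arXiv:1905.09930 — 14 statements merged into one kernel-verified Lean document; each statement's English description precedes it below -/
import Mathlib

section
/- Every chain complete poset is directed complete; that is, if every nonempty chain in a poset has a least upper bound, then every nonempty directed subset has a least upper bound. -/
open Set Cardinal

section Aux

variable {T : Type*} [PartialOrder T]

/-- Every finite subset of a directed set has an upper bound in the set. -/
private lemma dir_finset_ub {D : Set T} (hne : D.Nonempty) (hdir : DirectedOn (· ≤ ·) D) :
    ∀ F : Finset T, ↑F ⊆ D → ∃ u ∈ D, ∀ x ∈ F, x ≤ u := by
  intro F
  induction F using Finset.cons_induction with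
  | empty => exact fun _ => ⟨hne.choose, hne.choose_spec, by simp⟩
  | cons a F ha ih =>
    intro hsub
    have haD : a ∈ D := hsub (Finset.mem_cons_self a F)
    obtain ⟨u, huD, hu⟩ := ih (fun x hx => hsub (Finset.mem_cons_of_mem hx))
    obtain ⟨v, hvD, hav, huv⟩ := hdir a haD u huD
    refine ⟨v, hvD, fun x hx => ?_⟩
    rcases Finset.mem_cons.1 hx with rfl | hx
    · exact hav
    · exact (hu x hx).trans huv

/-- Iterated closure of a set under an upper-bound-choosing function. -/
private def iterCl (f : Finset T → T) (B : Set T) : ℕ → Set T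
  | 0 => B
  | n + 1 => iterCl f B n ∪ f '' {F : Finset T | ↑F ⊆ iterCl f B n}

/-- Closure of a set under an upper-bound-choosing function. -/
private def clo (f : Finset T → T) (B : Set T) : Set T := ⋃ n, iterCl f B n

private lemma iterCl_mono_n (f : Finset T → T) (B : Set T) {n m : ℕ} (h : n ≤ m) :
    iterCl f B n ⊆ iterCl f B m := by
  induction h with
  | refl => exact subset_rfl
  | step _ ih => exact ih.trans Set.subset_union_left

private lemma subset_clo (f : Finset T → T) (B : Set T) : B ⊆ clo f B :=
  Set.subset_iUnion (iterCl f B) 0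

private lemma clo_subset {f : Finset T → T} {B D : Set T} (hB : B ⊆ D)
    (hf : ∀ F : Finset T, ↑F ⊆ D → f F ∈ D) : clo f B ⊆ D := by
  refine Set.iUnion_subset fun n => ?_
  induction n with
  | zero => exact hB
  | succ n ih =>
    refine Set.union_subset ih ?_
    rintro _ ⟨F, hF, rfl⟩
    exact hf F (hF.trans ih)

private lemma clo_directed {f : Finset T → T} {B D : Set T} (hB : B ⊆ D)
    (hf : ∀ F : Finset T, ↑F ⊆ D → f F ∈ D ∧ ∀ x ∈ F, x ≤ f F) :
    DirectedOn (· ≤ ·) (clo f B) := by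
  classical
  intro x hx y hy
  obtain ⟨n, hxn⟩ : ∃ n, x ∈ iterCl f B n := Set.mem_iUnion.1 hx
  obtain ⟨m, hym⟩ : ∃ m, y ∈ iterCl f B m := Set.mem_iUnion.1 hy
  have hxk : x ∈ iterCl f B (max n m) := iterCl_mono_n f B (le_max_left n m) hxn
  have hyk : y ∈ iterCl f B (max n m) := iterCl_mono_n f B (le_max_right n m) hym
  have hFsub : ↑({x, y} : Finset T) ⊆ iterCl f B (max n m) := by
    intro z hz
    rcases Finset.mem_insert.1 hz with rfl | hz
    · exact hxk
    · rw [Finset.mem_singleton.1 hz]; exact hyk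
  have hmem : f {x, y} ∈ clo f B :=
    Set.mem_iUnion.2 ⟨max n m + 1, Or.inr ⟨{x, y}, hFsub, rfl⟩⟩
  have hFD : ↑({x, y} : Finset T) ⊆ D :=
    hFsub.trans ((Set.iUnion_subset_iff.1 (subset_rfl : clo f B ⊆ clo f B)) _ |>.trans
      (clo_subset hB fun F hF => (hf F hF).1))
  obtain ⟨-, hub⟩ := hf {x, y} hFD
  exact ⟨f {x, y}, hmem, hub x (by simp), hub y (by simp)⟩

private lemma clo_mono (f : Finset T → T) {B B' : Set T} (h : B ⊆ B') :
    clo f B ⊆ clo f B' := by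
  refine Set.iUnion_subset fun n => ?_
  have : ∀ n, iterCl f B n ⊆ iterCl f B' n := by
    intro n
    induction n with
    | zero => exact h
    | succ n ih =>
      refine Set.union_subset (ih.trans Set.subset_union_left) ?_
      rintro _ ⟨F, hF, rfl⟩
      exact Or.inr ⟨F, hF.trans ih, rfl⟩
  exact (this n).trans (Set.subset_iUnion (iterCl f B') n)

private lemma mk_finsetSub_le {A : Set T} (hA : A.Nonempty) :
    #{F : Finset T | ↑F ⊆ A} ≤ max ℵ₀ #A := by
  have : Nonempty A := hA.to_subtype
  classical
  have hsurj : {F : Finset T | ↑F ⊆ A} ⊆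
      Set.range (fun l : List A => (l.map Subtype.val).toFinset) := by
    intro F hF
    refine ⟨F.toList.attach.map fun x => ⟨x.1, hF (Finset.mem_toList.1 x.2)⟩, ?_⟩
    simp [List.map_map, Function.comp_def, List.attach_map_subtype_val, Finset.toList_toFinset]
  calc #{F : Finset T | ↑F ⊆ A} ≤ #(Set.range (fun l : List A => (l.map Subtype.val).toFinset)) :=
        Cardinal.mk_le_mk_of_subset hsurj
    _ ≤ #(List A) := Cardinal.mk_range_le
    _ = max #A ℵ₀ := Cardinal.mk_list_eq_max_mk_aleph0 _
    _ = max ℵ₀ #A := max_comm _ _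

private lemma mk_clo_le (f : Finset T → T) {B : Set T} (hB : B.Nonempty) :
    #(clo f B) ≤ max ℵ₀ #B := by
  have hiter : ∀ n, #(iterCl f B n) ≤ max ℵ₀ #B := by
    intro n
    induction n with
    | zero => exact le_max_right _ _
    | succ n ih =>
      have hAne : (iterCl f B n).Nonempty := hB.mono (iterCl_mono_n f B (Nat.zero_le n))
      have h1 : #(f '' {F : Finset T | ↑F ⊆ iterCl f B n}) ≤ max ℵ₀ #B := by
        calc #(f '' {F : Finset T | ↑F ⊆ iterCl f B n})
            ≤ #{F : Finset T | ↑F ⊆ iterCl f B n} := Cardinal.mk_image_le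
          _ ≤ max ℵ₀ #(iterCl f B n) := mk_finsetSub_le hAne
          _ ≤ max ℵ₀ (max ℵ₀ #B) := max_le_max_left _ ih
          _ = max ℵ₀ #B := by rw [← max_assoc, max_self]
      calc #(iterCl f B (n + 1)) ≤ #(iterCl f B n) + _ := Cardinal.mk_union_le _ _
        _ ≤ max ℵ₀ #B + max ℵ₀ #B := add_le_add ih h1
        _ = max ℵ₀ #B := Cardinal.add_eq_self (le_max_left _ _)
  have hre : clo f B = ⋃ m : ULift.{_} ℕ, iterCl f B m.down := by
    ext x; simp [clo, ULift.exists]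
  rw [hre]
  calc #(⋃ m : ULift ℕ, iterCl f B m.down)
      ≤ #(ULift ℕ) * ⨆ m : ULift ℕ, #(iterCl f B m.down) := Cardinal.mk_iUnion_le _
    _ ≤ ℵ₀ * max ℵ₀ #B := by
        refine mul_le_mul' (by simp) (ciSup_le' fun m => hiter m.down)
    _ ≤ max ℵ₀ #B * max ℵ₀ #B := mul_le_mul' (le_max_left _ _) le_rfl
    _ = max ℵ₀ #B := Cardinal.mul_eq_self (le_max_left _ _)

end Aux

/-- Every chain complete poset is directed complete. -/
theorem chainComplete_implies_directedComplete {T : Type*} [PartialOrder T]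
    (hcc : ∀ C : Set T, C.Nonempty → IsChain (· ≤ ·) C → ∃ s, IsLUB C s) :
    ∀ D : Set T, D.Nonempty → DirectedOn (· ≤ ·) D → ∃ s, IsLUB D s := by
  have main : ∀ c : Cardinal, ∀ D : Set T, #D = c → D.Nonempty → DirectedOn (· ≤ ·) D →
      ∃ s, IsLUB D s := by
    intro c
    induction c using WellFoundedLT.induction with
    | _ c ih =>
    intro D hDc hne hdir
    by_cases hfin : D.Finite
    · obtain ⟨u, huD, hu⟩ := dir_finset_ub hne hdir hfin.toFinset (by simp)
      exact ⟨u, IsGreatest.isLUB ⟨huD, fun x hx => hu x (hfin.mem_toFinset.2 hx)⟩⟩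
    · -- infinite case
      have hinf : D.Infinite := hfin
      haveI := hinf.to_subtype
      have hℵ : ℵ₀ ≤ c := hDc ▸ Cardinal.aleph0_le_mk D
      -- choose an upper-bound function for finite subsets of D
      have hub' : ∀ F : Finset T, ∃ u, ↑F ⊆ D → u ∈ D ∧ ∀ x ∈ F, x ≤ u := by
        intro F
        by_cases h : ↑F ⊆ D
        · obtain ⟨u, h1, h2⟩ := dir_finset_ub hne hdir F h
          exact ⟨u, fun _ => ⟨h1, h2⟩⟩
        · exact ⟨hne.choose, fun hc => absurd hc h⟩
      choose f hf using hub'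
      rcases hℵ.lt_or_eq with hlt | heq
      · -- uncountable case
        haveI : Nonempty c.ord.ToType := by
          rw [← Cardinal.mk_ne_zero_iff, Cardinal.mk_ord_toType]
          exact (aleph0_pos.trans_le hℵ).ne'
        obtain ⟨φ⟩ : Nonempty (c.ord.ToType ≃ D) :=
          Cardinal.eq.1 (by rw [Cardinal.mk_ord_toType, hDc])
        set B : c.ord.ToType → Set T := fun i => (fun j => (φ j : T)) '' Set.Iic i with hB
        have hBne : ∀ i, (B i).Nonempty := fun i => ⟨φ i, ⟨i, Set.mem_Iic.2 le_rfl, rfl⟩⟩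
        have hBD : ∀ i, B i ⊆ D := by rintro i _ ⟨j, -, rfl⟩; exact (φ j).2
        have hBlt : ∀ i, #(B i) < c := by
          intro i
          refine Cardinal.mk_image_le.trans_lt ?_
          have h1 : #(Set.Iic i) ≤ #(Set.Iio i) + 1 := by
            rw [← Set.Iio_union_right]
            refine (Cardinal.mk_union_le _ _).trans ?_
            simp
          exact h1.trans_lt (Cardinal.add_lt_of_lt hℵ (Cardinal.mk_Iio_ord_toType i)
            (one_lt_aleph0.trans_le hℵ))
        set E : c.ord.ToType → Set T := fun i => clo f (B i) with hE
        have hED : ∀ i, E i ⊆ D := fun i => clo_subset (hBD i) (fun F hF => (hf F hF).1)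
        have hEne : ∀ i, (E i).Nonempty := fun i => (hBne i).mono (subset_clo f (B i))
        have hEdir : ∀ i, DirectedOn (· ≤ ·) (E i) := fun i => clo_directed (hBD i) hf
        have hElt : ∀ i, #(E i) < c := fun i =>
          (mk_clo_le f (hBne i)).trans_lt (max_lt hlt (hBlt i))
        have hEmono : ∀ i j, i ≤ j → E i ⊆ E j := fun i j hij =>
          clo_mono f (Set.image_mono (Set.Iic_subset_Iic.2 hij))
        choose s hs using fun i => ih (#(E i)) (hElt i) (E i) rfl (hEne i) (hEdir i)
        have hsmono : ∀ i j, i ≤ j → s i ≤ s j := fun i j hij =>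
          (hs i).mono (hs j) (hEmono i j hij)
        have hchain : IsChain (· ≤ ·) (Set.range s) := by
          rintro _ ⟨i, rfl⟩ _ ⟨j, rfl⟩ -
          rcases le_total i j with h | h
          · exact Or.inl (hsmono i j h)
          · exact Or.inr (hsmono j i h)
        obtain ⟨t, ht⟩ := hcc (Set.range s) (Set.range_nonempty s) hchain
        refine ⟨t, ⟨fun d hd => ?_, fun u hu => ?_⟩⟩
        · have hdE : d ∈ E (φ.symm ⟨d, hd⟩) := by
            refine subset_clo f _ ⟨φ.symm ⟨d, hd⟩, Set.mem_Iic.2 le_rfl, ?_⟩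
            simp
          exact ((hs _).1 hdE).trans (ht.1 (Set.mem_range_self _))
        · refine ht.2 ?_
          rintro _ ⟨i, rfl⟩
          exact (hs i).2 fun x hx => hu (hED i hx)
      · -- countable case: c = ℵ₀, build an ω-chain
        haveI : Countable D := by
          rw [← Cardinal.mk_le_aleph0_iff, hDc, heq]
        obtain ⟨de⟩ : Nonempty (Denumerable D) :=
          nonempty_denumerable_iff.2 ⟨‹Countable D›, ‹Infinite D›⟩
        classical
        let e : ℕ ≃ D := (Denumerable.eqv D).symm
        let x : ℕ → T := fun n =>
          Nat.rec ((e 0 : D) : T) (fun n xn => f {xn, ((e (n + 1) : D) : T)}) n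
        have hxD : ∀ n, x n ∈ D := by
          intro n
          induction n with
          | zero => exact (e 0).2
          | succ n ihn =>
            refine (hf _ ?_).1
            intro z hz
            rcases Finset.mem_insert.1 hz with rfl | hz
            · exact ihn
            · rw [Finset.mem_singleton.1 hz]; exact (e (n + 1)).2
        have hsub : ∀ n, (↑({x n, ((e (n + 1) : D) : T)} : Finset T) : Set T) ⊆ D := by
          intro n z hz
          rcases Finset.mem_insert.1 hz with rfl | hz
          · exact hxD n
          · rw [Finset.mem_singleton.1 hz]; exact (e (n + 1)).2
        have hxmono : Monotone x :=
          monotone_nat_of_le_succ fun n => (hf _ (hsub n)).2 _ (by simp)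
        have hex : ∀ n, ((e n : D) : T) ≤ x n := by
          intro n
          cases n with
          | zero => exact le_rfl
          | succ n => exact (hf _ (hsub n)).2 _ (by simp)
        have hchain : IsChain (· ≤ ·) (Set.range x) := by
          rintro _ ⟨i, rfl⟩ _ ⟨j, rfl⟩ -
          rcases le_total i j with h | h
          · exact Or.inl (hxmono h)
          · exact Or.inr (hxmono h)
        obtain ⟨t, ht⟩ := hcc (Set.range x) (Set.range_nonempty x) hchain
        refine ⟨t, ⟨fun d hd => ?_, fun u hu => ?_⟩⟩
        · have : d = ((e (e.symm ⟨d, hd⟩) : D) : T) := by simp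
          rw [this]
          exact (hex _).trans (ht.1 (Set.mem_range_self _))
        · refine ht.2 ?_
          rintro _ ⟨n, rfl⟩
          exact hu (hxD n)
  exact fun D hne hdir => main (#D) D rfl hne hdir
end

section
/- If (X,𝓑) is an S₄ ball space (the intersection of every nest of balls contains a largest ball), then it is an S₄ᵈ ball space (the intersection of every directed system of balls contains a largest ball). -/
open Set Cardinal

namespace S4dAux

variable {X : Type*}

/-- Iterated closure of a family of sets under a binary operation. -/
def iterCl (w : Set X → Set X → Set X) (S : Set (Set X)) : ℕ → Set (Set X)
  | 0 => S
  | n + 1 => iterCl w S n ∪ Set.image2 w (iterCl w S n) (iterCl w S n)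

/-- Closure of a family of sets under a binary operation. -/
def cl (w : Set X → Set X → Set X) (S : Set (Set X)) : Set (Set X) :=
  ⋃ n, iterCl w S n

lemma iterCl_mono (w : Set X → Set X → Set X) (S : Set (Set X)) :
    Monotone (iterCl w S) :=
  monotone_nat_of_le_succ fun _ => subset_union_left

lemma subset_cl (w : Set X → Set X → Set X) (S : Set (Set X)) : S ⊆ cl w S :=
  subset_iUnion (iterCl w S) 0

lemma cl_subset {w : Set X → Set X → Set X} {S D : Set (Set X)} (hS : S ⊆ D)
    (hw : ∀ a ∈ D, ∀ b ∈ D, w a b ∈ D) : cl w S ⊆ D := by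
  apply iUnion_subset
  intro n
  induction n with
  | zero => exact hS
  | succ n ih =>
      refine union_subset ih ?_
      rintro _ ⟨a, ha, b, hb, rfl⟩
      exact hw a (ih ha) b (ih hb)

lemma cl_directed {w : Set X → Set X → Set X} {S : Set (Set X)} :
    ∀ a ∈ cl w S, ∀ b ∈ cl w S, w a b ∈ cl w S := by
  intro a ha b hb
  obtain ⟨m, ham⟩ := mem_iUnion.1 ha
  obtain ⟨n, hbn⟩ := mem_iUnion.1 hb
  have ha' : a ∈ iterCl w S (max m n) := iterCl_mono w S (le_max_left m n) ham
  have hb' : b ∈ iterCl w S (max m n) := iterCl_mono w S (le_max_right m n) hbn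
  exact mem_iUnion.2 ⟨max m n + 1, Or.inr (mem_image2_of_mem ha' hb')⟩

lemma cl_mono (w : Set X → Set X → Set X) {S T : Set (Set X)} (h : S ⊆ T) :
    cl w S ⊆ cl w T := by
  apply iUnion_mono
  intro n
  induction n with
  | zero => exact h
  | succ n ih => exact union_subset_union ih (image2_subset ih ih)

lemma mk_cl_le (w : Set X → Set X → Set X) (S : Set (Set X)) :
    #(cl w S) ≤ max #S ℵ₀ := by
  set μ := max #S ℵ₀ with hμ
  have hμinf : ℵ₀ ≤ μ := le_max_right _ _
  have hstep : ∀ n, #(iterCl w S n) ≤ μ := by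
    intro n
    induction n with
    | zero => exact le_max_left _ _
    | succ n ih =>
        calc #(iterCl w S (n + 1))
            ≤ #(iterCl w S n) + #(image2 w (iterCl w S n) (iterCl w S n)) := mk_union_le _ _
          _ ≤ μ + #(iterCl w S n) * #(iterCl w S n) := by
              gcongr
              exact mk_image2_le
          _ ≤ μ + μ * μ := by gcongr
          _ = μ + μ := by rw [mul_eq_self hμinf]
          _ = μ := add_eq_self hμinf
  have hrw : cl w S = ⋃ n : ULift.{_} ℕ, iterCl w S n.down := by
    ext x
    simp only [cl, mem_iUnion]
    exact ⟨fun ⟨n, hn⟩ => ⟨⟨n⟩, hn⟩, fun ⟨n, hn⟩ => ⟨n.down, hn⟩⟩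
  calc #(cl w S) ≤ #(ULift ℕ) * ⨆ n : ULift ℕ, #(iterCl w S n.down) := by
        rw [hrw]; exact mk_iUnion_le _
    _ ≤ ℵ₀ * μ := by
        gcongr
        · exact mk_le_aleph0
        · exact ciSup_le' fun n => hstep n.down
    _ ≤ μ * μ := by gcongr
    _ = μ := mul_eq_self hμinf

/-- A finite nonempty directed family has a least element. -/
lemma finite_directed_least {D : Set (Set X)} (hfin : D.Finite) (hne : D.Nonempty)
    (hdir : ∀ b₁ ∈ D, ∀ b₂ ∈ D, ∃ b ∈ D, b ⊆ b₁ ∩ b₂) :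
    ∃ e ∈ D, ∀ d ∈ D, e ⊆ d := by
  obtain ⟨d₀, hd₀⟩ := hne
  refine Set.Finite.induction_on_subset (motive := fun s _ => ∃ e ∈ D, ∀ d ∈ s, e ⊆ d) D hfin
    ⟨d₀, hd₀, fun d hd => absurd hd (notMem_empty d)⟩ ?_
  rintro a s haD _ _ ⟨e, heD, he⟩
  obtain ⟨e', he'D, he'⟩ := hdir e heD a haD
  refine ⟨e', he'D, ?_⟩
  rintro d (rfl | hd)
  · exact he'.trans inter_subset_right
  · exact (he'.trans inter_subset_left).trans (he d hd)

end S4dAux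

open S4dAux in
/-- The main auxiliary lemma, proved by well-founded induction on the cardinality of `D`. -/
theorem S4d_aux {X : Type*} [Nonempty X] (B : Set (Set X))
    (hS4 : ∀ N ⊆ B, N.Nonempty → IsChain (· ⊆ ·) N →
      ∃ b ∈ B, b ⊆ ⋂₀ N ∧ ∀ b' ∈ B, b' ⊆ ⋂₀ N → b' ⊆ b) :
    ∀ κ : Cardinal, ∀ D : Set (Set X), D ⊆ B → D.Nonempty →
      (∀ b₁ ∈ D, ∀ b₂ ∈ D, ∃ b ∈ D, b ⊆ b₁ ∩ b₂) → #D = κ →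
      ∃ b ∈ B, b ⊆ ⋂₀ D ∧ ∀ b' ∈ B, b' ⊆ ⋂₀ D → b' ⊆ b := by
  intro κ
  induction κ using WellFounded.induction Cardinal.lt_wf with
  | _ κ IH =>
  intro D hDB hDne hdir hκ
  classical
  -- choose a directedness witness function
  have hwex : ∃ w : Set X → Set X → Set X,
      ∀ a ∈ D, ∀ b ∈ D, w a b ∈ D ∧ w a b ⊆ a ∩ b := by
    choose f hf1 hf2 using hdir
    refine ⟨fun a b => if h : a ∈ D ∧ b ∈ D then f a h.1 b h.2 else a, ?_⟩
    intro a ha b hb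
    simp only [dif_pos (And.intro ha hb)]
    exact ⟨hf1 a ha b hb, hf2 a ha b hb⟩
  obtain ⟨w, hw⟩ := hwex
  by_cases hcnt : D.Countable
  · -- countable case
    rcases Set.finite_or_infinite D with hfin | hinf
    · -- finite case
      obtain ⟨e, heD, he⟩ := finite_directed_least hfin hDne hdir
      obtain ⟨b, hbB, hb1, hb2⟩ := hS4 {e} (singleton_subset_iff.2 (hDB heD))
        (singleton_nonempty e) (subsingleton_singleton.isChain)
      rw [sInter_singleton] at hb1 hb2
      have heq : ⋂₀ D = e := subset_antisymm (sInter_subset_of_mem heD) (subset_sInter he)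
      exact ⟨b, hbB, heq ▸ hb1, fun b' hb' hsub => hb2 b' hb' (heq ▸ hsub)⟩
    · -- countably infinite case: build a cofinal descending chain directly
      obtain ⟨f, hf⟩ := hcnt.exists_eq_range hDne
      have hfD : ∀ n, f n ∈ D := fun n => hf ▸ mem_range_self n
      set e : ℕ → Set X := fun n => Nat.rec (f 0) (fun n en => w en (f (n + 1))) n with he
      have heD : ∀ n, e n ∈ D := by
        intro n
        induction n with
        | zero => exact hfD 0
        | succ n ih => exact (hw _ ih _ (hfD (n + 1))).1
      have hestep : ∀ n, e (n + 1) ⊆ e n ∩ f (n + 1) := fun n =>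
        (hw _ (heD n) _ (hfD (n + 1))).2
      have hemono : ∀ m n, m ≤ n → e n ⊆ e m := by
        intro m n h
        induction n with
        | zero =>
            have hm : m = 0 := Nat.le_zero.1 h
            subst hm; exact subset_rfl
        | succ n ih =>
            rcases Nat.lt_or_ge m (n + 1) with h' | h'
            · exact ((hestep n).trans inter_subset_left).trans (ih (Nat.lt_succ_iff.1 h'))
            · have hmn : m = n + 1 := le_antisymm h h'
              subst hmn; exact subset_rfl
      have hef : ∀ n, e n ⊆ f n := by
        intro n
        cases n with
        | zero => exact subset_rfl
        | succ n => exact (hestep n).trans inter_subset_right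
      have hNchain : IsChain (· ⊆ ·) (Set.range e) := by
        rintro _ ⟨m, rfl⟩ _ ⟨n, rfl⟩ _
        rcases le_total m n with h | h
        · exact Or.inr (hemono m n h)
        · exact Or.inl (hemono n m h)
      have hNB : Set.range e ⊆ B := by rintro _ ⟨n, rfl⟩; exact hDB (heD n)
      have hNeq : ⋂₀ (Set.range e) = ⋂₀ D := by
        apply subset_antisymm
        · refine subset_sInter ?_
          rintro d hd
          rw [hf] at hd
          obtain ⟨n, rfl⟩ := hd
          exact (sInter_subset_of_mem (mem_range_self n)).trans (hef n)
        · exact subset_sInter fun t ht => by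
            obtain ⟨n, rfl⟩ := ht
            exact sInter_subset_of_mem (heD n)
      obtain ⟨b, hbB, hb1, hb2⟩ := hS4 (Set.range e) hNB ⟨e 0, mem_range_self 0⟩ hNchain
      rw [hNeq] at hb1 hb2
      exact ⟨b, hbB, hb1, hb2⟩
  · -- uncountable case
    have hκD : #D = κ := hκ
    have hℵ : ℵ₀ < #(↥D) := by
      rw [lt_iff_not_ge]
      intro h
      exact hcnt (le_aleph0_iff_set_countable.1 h)
    -- enumerate D by the initial ordinal of its cardinality
    set ι := (#(↥D)).ord.ToType with hι
    have hmkι : #ι = #(↥D) := mk_ord_toType _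
    obtain ⟨g⟩ := Cardinal.eq.1 hmkι
    set f : ι → Set X := fun i => ((g i : ↥D) : Set X) with hfdef
    have hfD : ∀ i, f i ∈ D := fun i => (g i).2
    have hfsurj : ∀ d ∈ D, ∃ i, f i = d := by
      intro d hd
      exact ⟨g.symm ⟨d, hd⟩, by simp [hfdef]⟩
    -- the directed pieces
    set Dp : ι → Set (Set X) := fun i => cl w (f '' Set.Iic i) with hDp
    have hDpD : ∀ i, Dp i ⊆ D := fun i =>
      cl_subset (by rintro _ ⟨j, _, rfl⟩; exact hfD j) (fun a ha b hb => (hw a ha b hb).1)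
    have hDpne : ∀ i, (Dp i).Nonempty :=
      fun i => ⟨f i, subset_cl _ _ ⟨i, mem_Iic.2 le_rfl, rfl⟩⟩
    have hDpdir : ∀ i, ∀ b₁ ∈ Dp i, ∀ b₂ ∈ Dp i, ∃ b ∈ Dp i, b ⊆ b₁ ∩ b₂ := by
      intro i b₁ h₁ b₂ h₂
      exact ⟨w b₁ b₂, cl_directed b₁ h₁ b₂ h₂, (hw b₁ (hDpD i h₁) b₂ (hDpD i h₂)).2⟩
    have hDpcard : ∀ i, #(Dp i) < κ := by
      intro i
      refine lt_of_le_of_lt (mk_cl_le w _) ?_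
      rw [← hκ]
      refine max_lt ?_ hℵ
      calc #(f '' Set.Iic i) ≤ #(Set.Iic i) := mk_image_le
        _ ≤ #(Set.Iio i) + 1 := by
            rw [show Set.Iic i = insert i (Set.Iio i) from Set.Iio_insert.symm]
            exact mk_insert_le
        _ < #(↥D) := add_lt_of_lt hℵ.le (mk_Iio_ord_toType i) (one_lt_aleph0.trans hℵ)
    have hDpmono : ∀ i j, i ≤ j → Dp i ⊆ Dp j := fun i j hij =>
      cl_mono w (image_mono (Iic_subset_Iic.2 hij))
    -- apply the induction hypothesis to each piece and choose largest balls
    have hIH : ∀ i : ι, ∃ b ∈ B, b ⊆ ⋂₀ (Dp i) ∧ ∀ b' ∈ B, b' ⊆ ⋂₀ (Dp i) → b' ⊆ b :=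
      fun i => IH #(Dp i) (hDpcard i) (Dp i)
        ((hDpD i).trans hDB) (hDpne i) (hDpdir i) rfl
    choose eb hebB heb1 heb2 using hIH
    have hebmono : ∀ i j : ι, i ≤ j → eb j ⊆ eb i := fun i j hij =>
      heb2 i (eb j) (hebB j)
        ((heb1 j).trans (sInter_subset_sInter (hDpmono i j hij)))
    have hNchain : IsChain (· ⊆ ·) (Set.range eb) := by
      rintro _ ⟨i, rfl⟩ _ ⟨j, rfl⟩ _
      rcases le_total i j with h | h
      · exact Or.inr (hebmono i j h)
      · exact Or.inl (hebmono j i h)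
    have hNB : Set.range eb ⊆ B := by rintro _ ⟨i, rfl⟩; exact hebB i
    obtain ⟨d₀, hd₀⟩ := hDne
    obtain ⟨b, hbB, hb1, hb2⟩ := hS4 (Set.range eb) hNB
      ⟨eb (g.symm ⟨d₀, hd₀⟩), mem_range_self _⟩ hNchain
    refine ⟨b, hbB, ?_, ?_⟩
    · refine subset_sInter fun d hd => ?_
      obtain ⟨i, rfl⟩ := hfsurj d hd
      have hfi : f i ∈ Dp i := subset_cl _ _ ⟨i, mem_Iic.2 le_rfl, rfl⟩
      exact hb1.trans ((sInter_subset_of_mem (mem_range_self i)).trans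
        ((heb1 i).trans (sInter_subset_of_mem hfi)))
    · intro b' hb' hsub
      apply hb2 b' hb'
      refine subset_sInter fun t ht => ?_
      obtain ⟨i, rfl⟩ := ht
      exact heb2 i b' hb' (hsub.trans (sInter_subset_sInter (hDpD i)))

/-- S₄ implies S₄ᵈ: if the intersection of every nest of balls contains a largest ball,
then the intersection of every directed system of balls contains a largest ball. -/
theorem S4_implies_S4d {X : Type*} [Nonempty X] (B : Set (Set X))
    (hBne : B.Nonempty) (hballs : ∀ b ∈ B, b.Nonempty)
    (hS4 : ∀ N ⊆ B, N.Nonempty → IsChain (· ⊆ ·) N →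
      ∃ b ∈ B, b ⊆ ⋂₀ N ∧ ∀ b' ∈ B, b' ⊆ ⋂₀ N → b' ⊆ b) :
    ∀ D ⊆ B, D.Nonempty →
      (∀ b₁ ∈ D, ∀ b₂ ∈ D, ∃ b ∈ D, b ⊆ b₁ ∩ b₂) →
      ∃ b ∈ B, b ⊆ ⋂₀ D ∧ ∀ b' ∈ B, b' ⊆ ⋂₀ D → b' ⊆ b := by
  intro D hDB hDne hdir
  exact S4d_aux B hS4 #D D hDB hDne hdir rfl
end

section
/- For an intersection closed ball space, S₁ (spherical completeness) implies S₅ᶜ (the intersection of every centered system of balls is a ball). Hence all properties in the hierarchy are equivalent for intersection closed ball spaces. -/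
/-- For an intersection closed ball space, S₁ implies S₅ᶜ (= S*). -/
theorem intersectionClosed_S1_implies_Sstar {X : Type*} [Nonempty X] (B : Set (Set X))
    (hBne : B.Nonempty) (hballs : ∀ b ∈ B, b.Nonempty)
    (hic : ∀ C ⊆ B, C.Nonempty → (⋂₀ C).Nonempty → ⋂₀ C ∈ B)
    (hS1 : ∀ N ⊆ B, N.Nonempty → IsChain (· ⊆ ·) N → (⋂₀ N).Nonempty) :
    ∀ C ⊆ B, C.Nonempty →
      (∀ F : Finset (Set X), ↑F ⊆ C → F.Nonempty → (⋂₀ (F : Set (Set X))).Nonempty) →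
      ⋂₀ C ∈ B := by
  classical
  intro C hCB hCne hfip
  -- the collection of centered systems containing C
  set S : Set (Set (Set X)) := {D | C ⊆ D ∧ D ⊆ B ∧
    ∀ F : Finset (Set X), ↑F ⊆ D → F.Nonempty → (⋂₀ (F : Set (Set X))).Nonempty} with hS
  have hCS : C ∈ S := ⟨Set.Subset.rfl, hCB, hfip⟩
  -- Zorn: a maximal centered system M ⊇ C
  have hZ1 : ∀ c ⊆ S, IsChain (· ⊆ ·) c → c.Nonempty →
      ∃ ub ∈ S, ∀ s ∈ c, s ⊆ ub := by
    intro c hcS hchain hcne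
    refine ⟨⋃₀ c, ⟨?_, ?_, ?_⟩, fun s hs => Set.subset_sUnion_of_mem hs⟩
    · obtain ⟨d, hd⟩ := hcne
      exact (hcS hd).1.trans (Set.subset_sUnion_of_mem hd)
    · exact Set.sUnion_subset fun d hd => (hcS hd).2.1
    · intro F hF hFne
      have hdir : DirectedOn (fun i j : Set (Set X) => i ⊆ j) c := hchain.directedOn
      have hF' : (F : Set (Set X)) ⊆ ⋃ i ∈ c, i := by
        simpa [Set.sUnion_eq_biUnion] using hF
      obtain ⟨d, hdc, hFd⟩ := hdir.exists_mem_subset_of_finset_subset_biUnion hcne hF'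
      exact (hcS hdc).2.2 F hFd hFne
  obtain ⟨M, hCM, hMmax⟩ := zorn_subset_nonempty S hZ1 C hCS
  obtain ⟨hCM', hMB, hMfip⟩ := hMmax.prop
  have hMne : M.Nonempty := hCne.mono hCM
  -- key: any ball meeting all finite intersections of M belongs to M
  have hkey : ∀ x ∈ B, (∀ F : Finset (Set X), ↑F ⊆ M → F.Nonempty →
      (x ∩ ⋂₀ (F : Set (Set X))).Nonempty) → x ∈ M := by
    intro x hxB hx
    have hxne : x.Nonempty := hballs x hxB
    have : insert x M ∈ S := by
      refine ⟨hCM.trans (Set.subset_insert _ _), Set.insert_subset hxB hMB, ?_⟩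
      intro F hF hFne
      by_cases hxF : x ∈ F
      · rcases (F.erase x).eq_empty_or_nonempty with he | hne
        · have : (F : Set (Set X)) ⊆ {x} := by
            intro y hy
            have hyF : y ∈ F := by exact_mod_cast hy
            rw [← Finset.insert_erase hxF] at hyF
            rcases Finset.mem_insert.mp hyF with h | h
            · exact h
            · simp [he] at h
          obtain ⟨a, ha⟩ := hxne
          exact ⟨a, fun t ht => (this ht) ▸ ha⟩
        · have herM : ↑(F.erase x) ⊆ M := by
            intro y hy
            have hyF : y ∈ F := Finset.mem_of_mem_erase (by exact_mod_cast hy)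
            have hyx : y ≠ x := Finset.ne_of_mem_erase (by exact_mod_cast hy)
            rcases hF hyF with h | h
            · exact absurd h hyx
            · exact h
          obtain ⟨a, hax, haI⟩ := hx (F.erase x) herM hne
          refine ⟨a, fun t ht => ?_⟩
          have htF : t ∈ F := by exact_mod_cast ht
          rw [← Finset.insert_erase hxF] at htF
          rcases Finset.mem_insert.mp htF with h | h
          · rw [h]; exact hax
          · exact haI _ (by exact_mod_cast h)
      · have : (F : Set (Set X)) ⊆ M := by
          intro y hy
          rcases hF hy with h | h
          · exact absurd (by rw [← h]; exact_mod_cast hy) hxF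
          · exact h
        exact hMfip F this hFne
    have heq := hMmax.eq_of_subset this (Set.subset_insert _ _)
    rw [heq]; exact Set.mem_insert _ _
  -- M is closed under binary intersections
  have hbin : ∀ a ∈ M, ∀ b ∈ M, a ∩ b ∈ M := by
    intro a ha b hb
    have habne : (a ∩ b).Nonempty := by
      have := hMfip {a, b} (by
        intro t ht
        simp only [Finset.coe_insert, Finset.coe_singleton, Set.mem_insert_iff,
          Set.mem_singleton_iff] at ht
        rcases ht with h | h
        · rw [h]; exact ha
        · rw [h]; exact hb) ⟨a, by simp⟩
      simpa using this
    have habB : a ∩ b ∈ B := by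
      have : ⋂₀ {a, b} ∈ B := hic {a, b}
        (by
          intro t ht
          simp only [Set.mem_insert_iff, Set.mem_singleton_iff] at ht
          rcases ht with h | h
          · rw [h]; exact hMB ha
          · rw [h]; exact hMB hb)
        ⟨a, by simp⟩ (by simpa using habne)
      simpa using this
    refine hkey _ habB ?_
    intro F hF hFne
    have := hMfip (insert a (insert b F)) (by
      intro t ht
      simp only [Finset.coe_insert, Set.mem_insert_iff] at ht
      rcases ht with h | h | h
      · rw [h]; exact ha
      · rw [h]; exact hb
      · exact hF h) ⟨a, by simp⟩
    simpa [Set.sInter_insert, ← Set.inter_assoc] using this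
  -- M is closed under nonempty finite intersections
  have hfin : ∀ F : Finset (Set X), ↑F ⊆ M → F.Nonempty → ⋂₀ (F : Set (Set X)) ∈ M := by
    intro F
    induction F using Finset.induction_on with
    | empty => intro _ h; exact absurd rfl h.ne_empty
    | @insert a F haF ih =>
      intro hsub _
      have haM : a ∈ M := hsub (by simp)
      rcases F.eq_empty_or_nonempty with rfl | hFne
      · simpa using haM
      · have hFM : (F : Set (Set X)) ⊆ M := fun t ht => hsub (by simp [ht])
        have := hbin a haM _ (ih hFM hFne)
        simpa [Set.sInter_insert] using this
  -- a maximal chain N inside M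
  obtain ⟨m₀, hm₀⟩ := hMne
  have hZ2 : ∀ c ⊆ {N | N ⊆ M ∧ IsChain (· ⊆ ·) N}, IsChain (· ⊆ ·) c → c.Nonempty →
      ∃ ub ∈ {N | N ⊆ M ∧ IsChain (· ⊆ ·) N}, ∀ s ∈ c, s ⊆ ub := by
    intro c hcS hchain hcne
    refine ⟨⋃₀ c, ⟨Set.sUnion_subset fun d hd => (hcS hd).1, ?_⟩,
      fun s hs => Set.subset_sUnion_of_mem hs⟩
    intro y hy z hz hyz
    obtain ⟨sy, hsy, hysy⟩ := hy
    obtain ⟨sz, hsz, hzsz⟩ := hz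
    rcases hchain.total hsy hsz with h | h
    · exact (hcS hsz).2 (h hysy) hzsz hyz
    · exact (hcS hsy).2 hysy (h hzsz) hyz
  obtain ⟨N, hN₀N, hNmax⟩ := zorn_subset_nonempty {N | N ⊆ M ∧ IsChain (· ⊆ ·) N} hZ2 {m₀}
    ⟨by simpa using hm₀, Set.Subsingleton.isChain (Set.subsingleton_singleton)⟩
  obtain ⟨hNM, hNchain⟩ := hNmax.prop
  have hNne : N.Nonempty := ⟨m₀, hN₀N rfl⟩
  set b : Set X := ⋂₀ N with hb
  have hbne : b.Nonempty := hS1 N (hNM.trans hMB) hNne hNchain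
  have hbB : b ∈ B := hic N (hNM.trans hMB) hNne hbne
  -- b meets every element of M
  have hbmeet : ∀ m ∈ M, (b ∩ m).Nonempty := by
    intro m hm
    set N' : Set (Set X) := (fun n => n ∩ m) '' N with hN'
    have hN'M : N' ⊆ M := by
      rintro _ ⟨n, hn, rfl⟩
      exact hbin n (hNM hn) m hm
    have hN'chain : IsChain (· ⊆ ·) N' := by
      rintro _ ⟨n₁, hn₁, rfl⟩ _ ⟨n₂, hn₂, rfl⟩ _
      rcases hNchain.total hn₁ hn₂ with h | h
      · exact Or.inl (Set.inter_subset_inter_left _ h)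
      · exact Or.inr (Set.inter_subset_inter_left _ h)
    have hN'ne : N'.Nonempty := hNne.image _
    have := hS1 N' (hN'M.trans hMB) hN'ne hN'chain
    have heq : ⋂₀ N' = b ∩ m := by
      ext a
      simp only [Set.mem_sInter, hN', Set.mem_image, hb, Set.mem_inter_iff,
        forall_exists_index, and_imp]
      constructor
      · intro h
        obtain ⟨n₀, hn₀⟩ := hNne
        exact ⟨fun n hn => (h (n ∩ m) n hn rfl).1, (h (n₀ ∩ m) n₀ hn₀ rfl).2⟩
      · rintro ⟨h1, h2⟩ t n hn rfl
        exact ⟨h1 n hn, h2⟩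
    rwa [heq] at this
  -- b ∈ M
  have hbM : b ∈ M := by
    refine hkey b hbB ?_
    intro F hF hFne
    exact hbmeet _ (hfin F hF hFne)
  -- b ⊆ m for all m ∈ M, via maximality of the chain N
  have hbsub : ∀ m ∈ M, b ⊆ m := by
    intro m hm
    have hbmM : b ∩ m ∈ M := hbin b hbM m hm
    have hchain' : IsChain (· ⊆ ·) (insert (b ∩ m) N) := by
      refine hNchain.insert ?_
      intro n hn _
      exact Or.inl ((Set.inter_subset_left).trans (Set.sInter_subset_of_mem hn))
    have hins : insert (b ∩ m) N ∈ {N | N ⊆ M ∧ IsChain (· ⊆ ·) N} :=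
      ⟨Set.insert_subset hbmM hNM, hchain'⟩
    have heqN := hNmax.eq_of_subset hins (Set.subset_insert _ _)
    have hbmN : b ∩ m ∈ N := by rw [heqN]; exact Set.mem_insert _ _
    have : b ⊆ b ∩ m := Set.sInter_subset_of_mem hbmN
    exact fun a ha => (this ha).2
  -- conclude
  have hbC : b ⊆ ⋂₀ C := by
    intro a ha
    exact Set.mem_sInter.mpr fun t ht => hbsub t (hCM ht) ha
  exact hic C hCB hCne (hbne.mono hbC)
end

section
/- In a contractive B_x–ball space, the intersection of a maximal nest of balls, if nonempty, equals B_a = {a} for some a in the intersection. -/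
/-- In a contractive B_x–ball space, the intersection of a maximal nest of balls,
if nonempty, is a singleton ball of the form B_a = {a}. -/
theorem maximal_nest_intersection_singleton {X : Type*} [Nonempty X]
    (bx : X → Set X) (hne : ∀ x, (bx x).Nonempty)
    (hC1 : ∀ x y, y ∈ bx x → bx y ⊆ bx x)
    (hC2 : ∀ x, (¬ ∃ a, bx x = {a}) → ∃ y ∈ bx x, bx y ⊂ bx x)
    (M : Set (Set X)) (hMsub : M ⊆ Set.range bx) (hMne : M.Nonempty)
    (hMchain : IsChain (· ⊆ ·) M)
    (hMmax : ∀ N, N ⊆ Set.range bx → N.Nonempty → IsChain (· ⊆ ·) N → M ⊆ N → N = M)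
    (hint : (⋂₀ M).Nonempty) :
    ∃ a ∈ ⋂₀ M, bx a = {a} ∧ ⋂₀ M = bx a := by
  obtain ⟨a, ha⟩ := hint
  -- bx a is contained in every element of M
  have hsub : ∀ B ∈ M, bx a ⊆ B := by
    intro B hB
    obtain ⟨z, rfl⟩ := hMsub hB
    exact hC1 z a (ha _ hB)
  -- a key lemma: any ball below all of M must be in M
  have key : ∀ w : X, (∀ B ∈ M, bx w ⊆ B) → bx w ∈ M := by
    intro w hw
    have hN := hMmax (M ∪ {bx w}) ?_ ?_ ?_ ?_
    · rw [← hN]; exact Or.inr rfl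
    · rintro B (hB | rfl)
      · exact hMsub hB
      · exact ⟨w, rfl⟩
    · exact hMne.mono Set.subset_union_left
    · rintro B (hB | rfl) C (hC | rfl) hne'
      · exact hMchain hB hC hne'
      · exact Or.inr (hw _ hB)
      · exact Or.inl (hw _ hC)
      · exact absurd rfl hne'
    · exact Set.subset_union_left
  have haM : bx a ∈ M := key a hsub
  have hint_eq : ⋂₀ M = bx a :=
    Set.Subset.antisymm (Set.sInter_subset_of_mem haM) (by
      intro x hx B hB; exact hsub B hB hx)
  have haa : a ∈ bx a := hint_eq ▸ ha
  have hsing : bx a = {a} := by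
    by_contra h
    rcases hC2 a (fun ⟨c, hc⟩ => h (by
      have : a ∈ ({c} : Set X) := hc ▸ haa
      rw [hc, Set.mem_singleton_iff.mp this])) with ⟨y, hy, hylt⟩
    have hyM : bx y ∈ M := key y (fun B hB => (hC1 a y hy).trans (hsub B hB))
    have : bx a ⊆ bx y := hint_eq ▸ Set.sInter_subset_of_mem hyM
    exact absurd this hylt.not_subset
  exact ⟨a, ha, hsing, hint_eq⟩
end

section
/- A contractive B_x–ball space is S₁ (spherically complete) if and only if it is S₂ (the intersection of every nest contains a ball); moreover, in a spherically complete contractive B_x–ball space, every ball B_x contains a singleton ball of the form B_a = {a}. -/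
/-- A contractive B_x–ball space is S₁ iff it is S₂; moreover, if it is spherically
complete, every ball B_x contains a singleton ball B_a = {a}. -/
theorem contractive_S1_iff_S2 {X : Type*} [Nonempty X]
    (bx : X → Set X) (hne : ∀ x, (bx x).Nonempty)
    (hC1 : ∀ x y, y ∈ bx x → bx y ⊆ bx x)
    (hC2 : ∀ x, (¬ ∃ a, bx x = {a}) → ∃ y ∈ bx x, bx y ⊂ bx x) :
    ((∀ N ⊆ Set.range bx, N.Nonempty → IsChain (· ⊆ ·) N → (⋂₀ N).Nonempty) ↔
     (∀ N ⊆ Set.range bx, N.Nonempty → IsChain (· ⊆ ·) N → ∃ b ∈ Set.range bx, b ⊆ ⋂₀ N)) ∧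
    ((∀ N ⊆ Set.range bx, N.Nonempty → IsChain (· ⊆ ·) N → (⋂₀ N).Nonempty) →
      ∀ x : X, ∃ a : X, bx a = {a} ∧ bx a ⊆ bx x) := by
  constructor
  · constructor
    · intro hS1 N hN hNne hch
      obtain ⟨z, hz⟩ := hS1 N hN hNne hch
      refine ⟨bx z, Set.mem_range_self z, ?_⟩
      intro w hw
      rw [Set.mem_sInter]
      intro t ht
      obtain ⟨y, rfl⟩ := hN ht
      exact hC1 y z (hz _ ht) hw
    · intro hS2 N hN hNne hch
      obtain ⟨b, ⟨y, rfl⟩, hb⟩ := hS2 N hN hNne hch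
      exact (hne y).mono hb
  · intro hS1 x
    set S : Set (Set X) := {b ∈ Set.range bx | b ⊆ bx x} with hS
    have hzorn : ∃ m ∈ S, ∀ a ∈ S, a ⊆ m → a = m := by
      have key : ∀ c ⊆ S, IsChain (· ⊆ ·) c → ∃ lb ∈ S, ∀ s ∈ c, lb ⊆ s := by
        intro c hc hchain
        rcases c.eq_empty_or_nonempty with rfl | hcne
        · exact ⟨bx x, ⟨Set.mem_range_self x, subset_rfl⟩, by simp⟩
        · have hcR : c ⊆ Set.range bx := fun t ht => (hc ht).1
          obtain ⟨z, hz⟩ := hS1 c hcR hcne hchain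
          obtain ⟨t0, ht0⟩ := hcne
          obtain ⟨y0, rfl⟩ := hcR ht0
          have hsub : ∀ t ∈ c, bx z ⊆ t := by
            intro t ht
            obtain ⟨y, rfl⟩ := hcR ht
            exact hC1 y z (hz _ ht)
          exact ⟨bx z, ⟨Set.mem_range_self z, (hsub _ ht0).trans (hc ht0).2⟩, hsub⟩
      obtain ⟨m, hm⟩ := zorn_superset S key
      exact ⟨m, hm.1, fun a ha hsub => le_antisymm hsub (hm.2 ha hsub)⟩
    obtain ⟨m, ⟨⟨y, rfl⟩, hmx⟩, hmin⟩ := hzorn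
    have hsing : ∃ a, bx y = {a} := by
      by_contra h
      obtain ⟨z, hzmem, hzlt⟩ := hC2 y h
      have : bx z = bx y :=
        hmin (bx z) ⟨Set.mem_range_self z, (hC1 y z hzmem).trans hmx⟩ hzlt.subset
      exact hzlt.ne this
    obtain ⟨a, ha⟩ := hsing
    have hay : a ∈ bx y := by rw [ha]; exact rfl
    have haa : bx a = {a} := by
      have h1 : bx a ⊆ {a} := ha ▸ hC1 y a hay
      obtain ⟨w, hw⟩ := hne a
      have := h1 hw
      simp only [Set.mem_singleton_iff] at this
      subst this
      exact le_antisymm h1 (Set.singleton_subset_iff.mpr hw)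
    exact ⟨a, haa, haa ▸ (ha ▸ hmx : ({a} : Set X) ⊆ bx x)⟩
end

section
/- If (X,𝓑) is a spherically complete contractive B_x–ball space and f : X → X satisfies fx ∈ B_x for all x ∈ X, then f has a fixed point in every ball B ∈ 𝓑. -/
/-- If (X,𝓑) is a spherically complete contractive B_x–ball space and f satisfies
fx ∈ B_x for all x, then f has a fixed point in every ball. -/
theorem fixedPoint_contractive_Bx {X : Type*} [Nonempty X]
    (bx : X → Set X) (hne : ∀ x, (bx x).Nonempty)
    (hC1 : ∀ x y, y ∈ bx x → bx y ⊆ bx x)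
    (hC2 : ∀ x, (¬ ∃ a, bx x = {a}) → ∃ y ∈ bx x, bx y ⊂ bx x)
    (hsc : ∀ N ⊆ Set.range bx, N.Nonempty → IsChain (· ⊆ ·) N → (⋂₀ N).Nonempty)
    (f : X → X) (hf : ∀ x, f x ∈ bx x) :
    ∀ x : X, ∃ z ∈ bx x, f z = z := by
  intro x
  set S : Set (Set X) := {B | ∃ y ∈ bx x, B = bx y} with hS
  have H : ∀ c ⊆ S, IsChain (· ⊆ ·) c → c.Nonempty → ∃ lb ∈ S, ∀ s ∈ c, lb ⊆ s := by
    intro c hcS hchain hcne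
    have hcr : c ⊆ Set.range bx := by
      intro B hB
      obtain ⟨y, _, rfl⟩ := hcS hB
      exact ⟨y, rfl⟩
    obtain ⟨z, hz⟩ := hsc c hcr hcne hchain
    obtain ⟨B0, hB0⟩ := hcne
    obtain ⟨y0, hy0, rfl⟩ := hcS hB0
    have hzx : z ∈ bx x := hC1 x y0 hy0 (hz _ hB0)
    refine ⟨bx z, ⟨z, hzx, rfl⟩, ?_⟩
    intro s hs
    obtain ⟨y, _, rfl⟩ := hcS hs
    exact hC1 y z (hz _ hs)
  obtain ⟨y0, hy0⟩ := hne x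
  obtain ⟨m, hmx, hmS, hmin⟩ := zorn_superset_nonempty S H (bx y0) ⟨y0, hy0, rfl⟩
  obtain ⟨z, hzx, rfl⟩ := hmS
  -- bx z is minimal; show it is a singleton
  have hsing : ∃ a, bx z = {a} := by
    by_contra h
    obtain ⟨y, hy, hsub⟩ := hC2 z h
    have hyx : y ∈ bx x := hC1 x z hzx hy
    have := hmin (y := bx y) ⟨y, hyx, rfl⟩ hsub.1
    exact hsub.2 this
  obtain ⟨a, ha⟩ := hsing
  have hfz : f z = a := by have := hf z; rw [ha] at this; exact this
  have haz : a ∈ bx z := by rw [ha]; rfl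
  have hba : bx a ⊆ bx z := hC1 z a haz
  have hba' : bx a = {a} := by
    rw [ha] at hba
    obtain ⟨b, hb⟩ := hne a
    have : b = a := hba hb
    subst this
    exact Set.eq_singleton_iff_nonempty_unique_mem.mpr ⟨⟨b, hb⟩, fun c hc => hba hc⟩
  have hfa : f a = a := by have := hf a; rw [hba'] at this; exact this
  exact ⟨a, hC1 x z hzx haz, hfa⟩
end

section
/- Let (X,𝓑) be a spherically complete ball space and f : X → X a function such that every f-closed subset of X contains an f-contracting ball. Then f has a fixed point in every f-closed subset of X. -/
/-- If every nonempty f-closed subset of X contains an f-contracting ball, then f has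
a fixed point in every nonempty f-closed subset. -/
theorem fixedPoint_of_fContracting_balls {X : Type*} [Nonempty X] (B : Set (Set X))
    (hBne : B.Nonempty) (hballs : ∀ b ∈ B, b.Nonempty)
    (hS1 : ∀ N ⊆ B, N.Nonempty → IsChain (· ⊆ ·) N → (⋂₀ N).Nonempty)
    (f : X → X)
    (hcontr : ∀ S : Set X, S.Nonempty → f '' S ⊆ S →
      ∃ b ∈ B, b ⊆ S ∧ f '' b ⊆ b ∧ ((∃ a, b = {a}) ∨ f '' b ⊂ b)) :
    ∀ S : Set X, S.Nonempty → f '' S ⊆ S → ∃ z ∈ S, f z = z := by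
  intro S hSne hScl
  classical
  -- C : f-closed balls inside S
  set C : Set (Set X) := {b | b ∈ B ∧ b ⊆ S ∧ f '' b ⊆ b} with hCdef
  obtain ⟨b0, hb0B, hb0S, hb0cl, -⟩ := hcontr S hSne hScl
  have hb0C : b0 ∈ C := ⟨hb0B, hb0S, hb0cl⟩
  -- maximal chain in C (as a subtype) containing b0
  have hsingle : IsChain (fun a b : ↥C => (a : Set X) ⊆ (b : Set X))
      {(⟨b0, hb0C⟩ : ↥C)} := Set.Subsingleton.isChain (Set.subsingleton_singleton)
  obtain ⟨M, hMmax, hMsub⟩ := hsingle.exists_maxChain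
  have hb0M : (⟨b0, hb0C⟩ : ↥C) ∈ M := hMsub rfl
  set N : Set (Set X) := Subtype.val '' M with hNdef
  have hNB : N ⊆ B := by
    rintro _ ⟨m, hm, rfl⟩; exact m.2.1
  have hNne : N.Nonempty := ⟨b0, ⟨_, hb0M, rfl⟩⟩
  have hNchain : IsChain (· ⊆ ·) N := by
    rintro _ ⟨m, hm, rfl⟩ _ ⟨m', hm', rfl⟩ hne
    exact hMmax.1 hm hm' (fun h => hne (by rw [h]))
  set T : Set X := ⋂₀ N with hTdef
  have hTne : T.Nonempty := hS1 N hNB hNne hNchain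
  have hTsubN : ∀ b ∈ N, T ⊆ b := fun b hb => Set.sInter_subset_of_mem hb
  have hTS : T ⊆ S := (hTsubN b0 ⟨_, hb0M, rfl⟩).trans hb0S
  have hTcl : f '' T ⊆ T := by
    rintro _ ⟨x, hx, rfl⟩
    refine Set.mem_sInter.2 ?_
    rintro b hb
    rcases hb with ⟨m, hm, rfl⟩
    exact m.2.2.2 ⟨x, Set.mem_sInter.1 hx _ ⟨m, hm, rfl⟩, rfl⟩
  obtain ⟨b, hbB, hbT, hbcl, hcase⟩ := hcontr T hTne hTcl
  rcases hcase with ⟨a, rfl⟩ | hstrict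
  · refine ⟨a, hTS (hbT rfl), ?_⟩
    have : f a ∈ ({a} : Set X) := hbcl ⟨a, rfl, rfl⟩
    simpa using this
  · -- contracting case: derive a contradiction with maximality
    exfalso
    have hbne : b.Nonempty := hballs b hbB
    have hfbne : (f '' b).Nonempty := hbne.image f
    have hfbcl : f '' (f '' b) ⊆ f '' b := Set.image_mono hbcl
    obtain ⟨b', hb'B, hb'fb, hb'cl, -⟩ := hcontr (f '' b) hfbne hfbcl
    have hb'T : b' ⊆ T := hb'fb.trans (hstrict.1.trans hbT)
    have hb'C : b' ∈ C := ⟨hb'B, hb'T.trans hTS, hb'cl⟩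
    have hchain' : IsChain (fun a b : ↥C => (a : Set X) ⊆ (b : Set X))
        (insert (⟨b', hb'C⟩ : ↥C) M) := by
      refine hMmax.1.insert ?_
      intro m hm _
      exact Or.inl (hb'T.trans (hTsubN m ⟨m, hm, rfl⟩))
    have hmem : (⟨b', hb'C⟩ : ↥C) ∈ M := by
      have := hMmax.2 hchain' (Set.subset_insert _ _)
      rw [this]; exact Set.mem_insert _ _
    have hTb' : T ⊆ b' := hTsubN b' ⟨_, hmem, rfl⟩
    exact hstrict.2 (hbT.trans (hTb'.trans hb'fb))
end

section
/- Let (X,𝓑) be an S₂ ball space and f : X → X. If every ball in 𝓑 contains a fixed point of f or properly contains another ball, then f has a fixed point in every ball. -/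
/-- In an S₂ ball space, if every ball contains a fixed point of f or properly
contains another ball, then f has a fixed point in every ball. -/
theorem fixedPoint_S2 {X : Type*} [Nonempty X] (B : Set (Set X))
    (hBne : B.Nonempty) (hballs : ∀ b ∈ B, b.Nonempty)
    (hS2 : ∀ N ⊆ B, N.Nonempty → IsChain (· ⊆ ·) N → ∃ b ∈ B, b ⊆ ⋂₀ N)
    (f : X → X)
    (hyp : ∀ b ∈ B, (∃ x ∈ b, f x = x) ∨ ∃ b' ∈ B, b' ⊂ b) :
    ∀ b ∈ B, ∃ x ∈ b, f x = x := by
  intro b hb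
  obtain ⟨m, hmb, hmem, hmin⟩ := zorn_superset_nonempty B
    (fun c hc hchain hcne => by
      obtain ⟨lb, hlb, hsub⟩ := hS2 c hc hcne hchain
      exact ⟨lb, hlb, fun s hs => hsub.trans (Set.sInter_subset_of_mem hs)⟩) b hb
  rcases hyp m hmem with ⟨x, hx, hfx⟩ | ⟨b', hb', hb'm⟩
  · exact ⟨x, hmb hx, hfx⟩
  · exact absurd (hmin hb' hb'm.subset) hb'm.not_subset
end

section
/- Suppose for a function f : X → X there is a ball space (X,𝓑^f) such that every ball in 𝓑^f is f-closed, and the intersection of every nest of balls in 𝓑^f is either a singleton or contains a ball of 𝓑^f properly contained in each ball of the nest. Then f has a fixed point in every ball of 𝓑^f. -/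
/-- If every ball of 𝓑^f is f-closed and the intersection of every nest is a singleton
or contains a ball of 𝓑^f properly contained in each ball of the nest, then f has a
fixed point in every ball of 𝓑^f. -/
theorem fixedPoint_adapted_ballspace {X : Type*} [Nonempty X] (Bf : Set (Set X))
    (hBne : Bf.Nonempty) (hballs : ∀ b ∈ Bf, b.Nonempty)
    (f : X → X)
    (hB1 : ∀ b ∈ Bf, f '' b ⊆ b)
    (hB2 : ∀ N ⊆ Bf, N.Nonempty → IsChain (· ⊆ ·) N →
      (∃ a, ⋂₀ N = {a}) ∨ ∃ b ∈ Bf, b ⊆ ⋂₀ N ∧ ∀ b' ∈ N, b ⊂ b') :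
    ∀ b ∈ Bf, ∃ z ∈ b, f z = z := by
  intro b0 hb0
  -- work in the subtype of balls
  set r : ↥Bf → ↥Bf → Prop := fun x y => (x : Set X) ⊆ (y : Set X) with hr
  have hchain0 : IsChain r ({⟨b0, hb0⟩} : Set ↥Bf) := Set.Subsingleton.isChain (by simp)
  obtain ⟨M, hMmax, hM0⟩ := hchain0.exists_maxChain
  have hb0M : (⟨b0, hb0⟩ : ↥Bf) ∈ M := hM0 rfl
  set N : Set (Set X) := Subtype.val '' M with hN
  have hNsub : N ⊆ Bf := by rintro _ ⟨x, _, rfl⟩; exact x.2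
  have hNne : N.Nonempty := ⟨b0, ⟨⟨b0, hb0⟩, hb0M, rfl⟩⟩
  have hNchain : IsChain (· ⊆ ·) N := by
    rintro _ ⟨x, hx, rfl⟩ _ ⟨y, hy, rfl⟩ hne
    rcases hMmax.1 hx hy (fun h => hne (by rw [h])) with h | h
    · exact Or.inl h
    · exact Or.inr h
  rcases hB2 N hNsub hNne hNchain with ⟨a, ha⟩ | ⟨b, hbBf, hbsub, hbproper⟩
  · -- singleton case: a is a fixed point in b0
    have haN : a ∈ ⋂₀ N := by rw [ha]; exact rfl
    have hab0 : a ∈ b0 := haN b0 ⟨⟨b0, hb0⟩, hb0M, rfl⟩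
    have hfa : f a ∈ ⋂₀ N := by
      intro t ht
      exact hB1 t (hNsub ht) ⟨a, haN t ht, rfl⟩
    rw [ha] at hfa
    exact ⟨a, hab0, hfa⟩
  · -- proper ball case: contradicts maximality
    exfalso
    have hbM : (⟨b, hbBf⟩ : ↥Bf) ∉ M := by
      intro h
      exact (hbproper b ⟨⟨b, hbBf⟩, h, rfl⟩).2 (le_refl b)
    have hchain' : IsChain r (insert (⟨b, hbBf⟩ : ↥Bf) M) := by
      apply hMmax.1.insert
      intro y hy _
      exact Or.inl (hbproper y ⟨y, hy, rfl⟩).1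
    have := hMmax.2 hchain' (Set.subset_insert _ _)
    exact hbM (this ▸ Set.mem_insert _ _)
end

section
/- A metric space (X,d) is complete if and only if for every (equivalently, for some) subset S of the positive reals whose only accumulation point is 0, the ball space of closed metric balls with radii in S is spherically complete. -/
open Filter Topology

private lemma small_mem {S : Set ℝ} (hS : S ⊆ Set.Ioi (0:ℝ)) (h0 : AccPt (0:ℝ) (𝓟 S)) :
    ∀ ε : ℝ, 0 < ε → ∃ t, t ∈ S ∧ 0 < t ∧ t < ε := by
  intro ε hε
  obtain ⟨y, ⟨hyU, hyS⟩, _⟩ := accPt_iff_nhds.1 h0 (Metric.ball 0 ε)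
    (Metric.ball_mem_nhds _ hε)
  have hy : |y| < ε := by
    simpa [Real.dist_eq] using Metric.mem_ball.1 hyU
  exact ⟨y, hyS, hS hyS, lt_of_le_of_lt (le_abs_self y) hy⟩

private lemma chain_of_complete {X : Type*} [MetricSpace X] [CompleteSpace X]
    {S : Set ℝ} (hS : S ⊆ Set.Ioi (0:ℝ))
    (hacc : ∀ r : ℝ, AccPt r (𝓟 S) → r = 0) :
    ∀ N ⊆ {b : Set X | ∃ (x : X) (r : ℝ), r ∈ S ∧ b = Metric.closedBall x r},
      N.Nonempty → IsChain (· ⊆ ·) N → (⋂₀ N).Nonempty := by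
  intro N hN hNne hchain
  set R : Set ℝ := {r | r ∈ S ∧ ∃ x : X, Metric.closedBall x r ∈ N} with hR
  have hRS : R ⊆ S := fun r hr => hr.1
  have hRpos : ∀ r ∈ R, 0 < r := fun r hr => hS hr.1
  have hRne : R.Nonempty := by
    obtain ⟨b, hb⟩ := hNne
    obtain ⟨x, r, hrS, rfl⟩ := hN hb
    exact ⟨r, hrS, x, hb⟩
  have hRbdd : BddBelow R := ⟨0, fun r hr => (hRpos r hr).le⟩
  set ρ := sInf R with hρ
  have hρ0 : 0 ≤ ρ := le_csInf hRne fun r hr => (hRpos r hr).le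
  have hd : ∀ x r y s, 0 < r → 0 < s → Metric.closedBall x r ∈ N →
      Metric.closedBall y s ∈ N → dist x y ≤ max r s := by
    intro x r y s hr hs hxN hyN
    rcases eq_or_ne (Metric.closedBall x r) (Metric.closedBall y s) with heq | hne
    · have hx : x ∈ Metric.closedBall y s := heq ▸ Metric.mem_closedBall_self hr.le
      exact le_trans (Metric.mem_closedBall.1 hx) (le_max_right _ _)
    · rcases hchain hxN hyN hne with h | h
      · have hx : x ∈ Metric.closedBall y s := h (Metric.mem_closedBall_self hr.le)
        exact le_trans (Metric.mem_closedBall.1 hx) (le_max_right _ _)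
      · have hy : y ∈ Metric.closedBall x r := h (Metric.mem_closedBall_self hs.le)
        have h2 := Metric.mem_closedBall.1 hy
        rw [dist_comm] at h2
        exact le_trans h2 (le_max_left _ _)
  rcases eq_or_lt_of_le hρ0 with hρz | hρpos
  · -- inf of radii is 0
    have hex : ∀ n : ℕ, ∃ r ∈ R, r < (1/2 : ℝ)^n := by
      intro n
      have hlt : ρ < (1/2:ℝ)^n := by rw [← hρz]; positivity
      exact (csInf_lt_iff hRbdd hRne).1 hlt
    choose r hrR hrlt using hex
    choose xc hxc using fun n => (hrR n).2
    have hpowK : ∀ {K n : ℕ}, K ≤ n → ((1:ℝ)/2)^n ≤ (1/2)^K := fun {K n} h =>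
      pow_le_pow_of_le_one (by norm_num) (by norm_num) h
    have hcauchy : CauchySeq xc := by
      rw [Metric.cauchySeq_iff]
      intro ε hε
      obtain ⟨K, hK⟩ := exists_pow_lt_of_lt_one hε (by norm_num : (1/2:ℝ) < 1)
      refine ⟨K, fun m hm n hn => ?_⟩
      have h1 : dist (xc m) (xc n) ≤ max (r m) (r n) :=
        hd _ _ _ _ (hRpos _ (hrR m)) (hRpos _ (hrR n)) (hxc m) (hxc n)
      have h2 : r m < (1/2:ℝ)^K := lt_of_lt_of_le (hrlt m) (hpowK hm)
      have h3 : r n < (1/2:ℝ)^K := lt_of_lt_of_le (hrlt n) (hpowK hn)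
      have h4 : max (r m) (r n) < (1/2:ℝ)^K := max_lt h2 h3
      linarith
    obtain ⟨x, hx⟩ := cauchySeq_tendsto_of_complete hcauchy
    refine ⟨x, fun b hb => ?_⟩
    obtain ⟨y, s, hsS, rfl⟩ := hN hb
    have hspos : 0 < s := hS hsS
    by_cases hfreq : ∃ᶠ n in atTop, Metric.closedBall (xc n) (r n) ⊆ Metric.closedBall y s
    · have hmem : ∃ᶠ n in atTop, xc n ∈ Metric.closedBall y s :=
        hfreq.mono fun n h => h (Metric.mem_closedBall_self (hRpos _ (hrR n)).le)
      have hcl := mem_closure_of_frequently_of_tendsto hmem hx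
      rwa [IsClosed.closure_eq Metric.isClosed_closedBall] at hcl
    · rw [not_frequently] at hfreq
      have hev : ∀ᶠ n in atTop, Metric.closedBall y s ⊆ Metric.closedBall (xc n) (r n) := by
        filter_upwards [hfreq] with n hn
        rcases eq_or_ne (Metric.closedBall (xc n) (r n)) (Metric.closedBall y s) with heq | hne
        · rw [heq]
        · rcases hchain (hxc n) hb hne with h | h
          · exact absurd h hn
          · exact h
      have hyx : Tendsto xc atTop (𝓝 y) := by
        have hb1 : ∀ᶠ n in atTop, dist (xc n) y ≤ (1/2:ℝ)^n := by
          filter_upwards [hev] with n hn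
          have hyn : y ∈ Metric.closedBall (xc n) (r n) :=
            hn (Metric.mem_closedBall_self hspos.le)
          have h2 := Metric.mem_closedBall.1 hyn
          rw [dist_comm] at h2
          exact le_trans h2 (hrlt n).le
        have h0 : Tendsto (fun n => dist (xc n) y) atTop (𝓝 0) :=
          squeeze_zero' (Eventually.of_forall fun n => dist_nonneg) hb1
            (tendsto_pow_atTop_nhds_zero_of_lt_one (by norm_num) (by norm_num))
        exact tendsto_iff_dist_tendsto_zero.2 h0
      have hxy : x = y := tendsto_nhds_unique hx hyx
      exact hxy ▸ Metric.mem_closedBall_self hspos.le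
  · -- inf of radii is positive: it is attained
    have hρR : ρ ∈ R := by
      by_contra hρR
      have hA : AccPt ρ (𝓟 S) := by
        rw [accPt_iff_nhds]
        intro U hU
        obtain ⟨ε, hε, hball⟩ := Metric.mem_nhds_iff.1 hU
        obtain ⟨a, haR, halt⟩ := Real.lt_sInf_add_pos hRne hε
        have h1 : ρ ≤ a := csInf_le hRbdd haR
        refine ⟨a, ⟨hball ?_, hRS haR⟩, fun h => hρR (h ▸ haR)⟩
        rw [Metric.mem_ball, Real.dist_eq, abs_of_nonneg (by linarith)]
        linarith
      exact absurd (hacc ρ hA) (ne_of_gt hρpos)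
    obtain ⟨hρS, xm, hxm⟩ := hρR
    refine ⟨xm, fun b hb => ?_⟩
    obtain ⟨y, s, hsS, rfl⟩ := hN hb
    have hspos : 0 < s := hS hsS
    have hsR : s ∈ R := ⟨hsS, y, hb⟩
    have hρs : ρ ≤ s := csInf_le hRbdd hsR
    rcases eq_or_ne (Metric.closedBall xm ρ) (Metric.closedBall y s) with heq | hne
    · exact heq ▸ Metric.mem_closedBall_self hρpos.le
    · rcases hchain hxm hb hne with h | h
      · exact h (Metric.mem_closedBall_self hρpos.le)
      · have hy : y ∈ Metric.closedBall xm ρ := h (Metric.mem_closedBall_self hspos.le)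
        have h2 := Metric.mem_closedBall.1 hy
        rw [dist_comm] at h2
        rw [Metric.mem_closedBall]
        linarith

private lemma complete_of_chain {X : Type*} [MetricSpace X] {S : Set ℝ}
    (hS : S ⊆ Set.Ioi (0:ℝ)) (h0 : AccPt (0:ℝ) (𝓟 S))
    (hch : ∀ N ⊆ {b : Set X | ∃ (x : X) (r : ℝ), r ∈ S ∧ b = Metric.closedBall x r},
      N.Nonempty → IsChain (· ⊆ ·) N → (⋂₀ N).Nonempty) :
    CompleteSpace X := by
  have key := small_mem hS h0
  choose f hfS hfpos hflt using key
  let T := {t : ℝ // t ∈ S ∧ 0 < t}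
  let g : T → T := fun t => ⟨f (t.1/2) (by have := t.2.2; linarith), hfS _ _, hfpos _ _⟩
  let t0 : T := ⟨f 1 one_pos, hfS _ _, hfpos _ _⟩
  let sq : ℕ → T := fun k => g^[k] t0
  set s : ℕ → ℝ := fun k => (sq k).1 with hs
  have hsS : ∀ k, s k ∈ S := fun k => (sq k).2.1
  have hspos : ∀ k, 0 < s k := fun k => (sq k).2.2
  have hstep : ∀ k, s (k+1) < s k / 2 := by
    intro k
    have hit : sq (k+1) = g (sq k) := Function.iterate_succ_apply' g k t0
    show (sq (k+1)).1 < (sq k).1 / 2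
    rw [hit]
    exact hflt _ _
  have hsdec : ∀ k, s (k+1) < s k := fun k =>
    lt_of_lt_of_le (hstep k) (by have := hspos k; linarith)
  have hbound : ∀ k, s k ≤ s 0 * (1/2)^k := by
    intro k
    induction k with
    | zero => simp
    | succ n ih =>
      have h1 := hstep n
      have h2 : s 0 * (1/2:ℝ)^(n+1) = (s 0 * (1/2)^n) / 2 := by ring
      rw [h2]
      linarith
  have hs0 : Tendsto s atTop (𝓝 0) := by
    have hg : Tendsto (fun k : ℕ => s 0 * (1/2:ℝ)^k) atTop (𝓝 0) := by
      have := tendsto_pow_atTop_nhds_zero_of_lt_one (by norm_num : (0:ℝ) ≤ 1/2)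
        (by norm_num : (1/2:ℝ) < 1)
      simpa using this.const_mul (s 0)
    exact squeeze_zero' (Eventually.of_forall fun k => (hspos k).le)
      (Eventually.of_forall hbound) hg
  apply Metric.complete_of_convergent_controlled_sequences (fun k => s k - s (k+1))
    (fun k => by have := hsdec k; show 0 < s k - s (k+1); linarith)
  intro u hu
  set b : ℕ → Set X := fun k => Metric.closedBall (u k) (s k) with hb
  have hmono : ∀ k, b (k+1) ⊆ b k := by
    intro k z hz
    simp only [hb, Metric.mem_closedBall] at hz ⊢
    have h1 : dist (u (k+1)) (u k) < s k - s (k+1) := hu k (k+1) k (Nat.le_succ k) le_rfl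
    calc dist z (u k) ≤ dist z (u (k+1)) + dist (u (k+1)) (u k) := dist_triangle _ _ _
      _ ≤ s (k+1) + (s k - s (k+1)) := by linarith
      _ = s k := by ring
  have hanti : Antitone b := antitone_nat_of_succ_le hmono
  obtain ⟨x, hx⟩ := hch (Set.range b)
    (by rintro _ ⟨k, rfl⟩; exact ⟨u k, s k, hsS k, rfl⟩)
    ⟨b 0, ⟨0, rfl⟩⟩
    (by
      rintro _ ⟨j, rfl⟩ _ ⟨k, rfl⟩ _
      rcases le_total j k with h | h
      · right; exact hanti h
      · left; exact hanti h)
  refine ⟨x, ?_⟩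
  have hdk : ∀ k, dist (u k) x ≤ s k := by
    intro k
    have hk := hx (b k) ⟨k, rfl⟩
    simp only [hb, Metric.mem_closedBall] at hk
    rw [dist_comm]
    exact hk
  rw [tendsto_iff_dist_tendsto_zero]
  exact squeeze_zero' (Eventually.of_forall fun k => dist_nonneg)
    (Eventually.of_forall hdk) hs0

private lemma S0_sub : (Set.range fun n : ℕ => ((1:ℝ)/2)^n) ⊆ Set.Ioi (0:ℝ) := by
  rintro _ ⟨n, rfl⟩
  simp only [Set.mem_Ioi]
  positivity

private lemma S0_acc : AccPt (0:ℝ) (𝓟 (Set.range fun n : ℕ => ((1:ℝ)/2)^n)) := by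
  rw [accPt_iff_nhds]
  intro U hU
  obtain ⟨ε, hε, hball⟩ := Metric.mem_nhds_iff.1 hU
  obtain ⟨n, hn⟩ := exists_pow_lt_of_lt_one hε (by norm_num : (1/2:ℝ) < 1)
  refine ⟨(1/2:ℝ)^n, ⟨hball ?_, ⟨n, rfl⟩⟩, by positivity⟩
  rw [Metric.mem_ball, Real.dist_eq, sub_zero, abs_of_nonneg (by positivity)]
  exact hn

private lemma S0_only : ∀ r : ℝ, AccPt r (𝓟 (Set.range fun n : ℕ => ((1:ℝ)/2)^n)) → r = 0 := by
  intro r hr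
  by_contra hr0
  rcases lt_or_gt_of_ne hr0 with hneg | hpos
  · obtain ⟨y, ⟨hyU, k, hk⟩, _⟩ := accPt_iff_nhds.1 hr (Set.Iio 0)
      (isOpen_Iio.mem_nhds hneg)
    subst hk
    simp only [Set.mem_Iio] at hyU
    have hkpos : (0:ℝ) < (1/2:ℝ)^k := by positivity
    linarith
  · obtain ⟨n, hn⟩ := exists_pow_lt_of_lt_one hpos (by norm_num : (1/2:ℝ) < 1)
    set F : Set ℝ := (fun k : ℕ => ((1:ℝ)/2)^k) '' Set.Iic n with hF
    have hFfin : F.Finite := (Set.finite_Iic n).image _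
    set U : Set ℝ := Set.Ioi ((1/2:ℝ)^n) ∩ (F \ {r})ᶜ with hU
    have hUopen : IsOpen U :=
      isOpen_Ioi.inter (hFfin.diff (t := {r})).isClosed.isOpen_compl
    have hrU : r ∈ U := ⟨hn, fun h => h.2 rfl⟩
    obtain ⟨y, ⟨⟨hy1, hy2⟩, k, hk⟩, hyne⟩ := accPt_iff_nhds.1 hr U
      (hUopen.mem_nhds hrU)
    subst hk
    simp only [Set.mem_Ioi] at hy1
    have hkn : k ≤ n := by
      by_contra hkn
      push_neg at hkn
      have hlt : ((1:ℝ)/2)^k < (1/2)^n :=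
        pow_lt_pow_right_of_lt_one₀ (by norm_num) (by norm_num) hkn
      linarith
    have hyF : (fun n : ℕ => ((1:ℝ)/2)^n) k ∈ F := ⟨k, hkn, rfl⟩
    have hmem : (fun n : ℕ => ((1:ℝ)/2)^n) k ∈ ({r} : Set ℝ) := by
      by_contra h
      exact hy2 ⟨hyF, h⟩
    exact hyne hmem

/-- A metric space is complete iff for every (equivalently, for some) set S of positive
reals with 0 as its only accumulation point, the ball space of closed metric balls with
radii in S is spherically complete. -/
theorem complete_iff_ballspace_radii {X : Type*} [MetricSpace X] :
    (CompleteSpace X ↔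
      ∀ S : Set ℝ, S ⊆ Set.Ioi (0:ℝ) → AccPt (0:ℝ) (𝓟 S) →
        (∀ r : ℝ, AccPt r (𝓟 S) → r = 0) →
        (∀ N ⊆ {b : Set X | ∃ (x : X) (r : ℝ), r ∈ S ∧ b = Metric.closedBall x r},
          N.Nonempty → IsChain (· ⊆ ·) N → (⋂₀ N).Nonempty)) ∧
    (CompleteSpace X ↔
      ∃ S : Set ℝ, S ⊆ Set.Ioi (0:ℝ) ∧ AccPt (0:ℝ) (𝓟 S) ∧
        (∀ r : ℝ, AccPt r (𝓟 S) → r = 0) ∧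
        (∀ N ⊆ {b : Set X | ∃ (x : X) (r : ℝ), r ∈ S ∧ b = Metric.closedBall x r},
          N.Nonempty → IsChain (· ⊆ ·) N → (⋂₀ N).Nonempty)) := by
  constructor
  · constructor
    · intro h S hSsub _ hacc
      haveI := h
      exact chain_of_complete hSsub hacc
    · intro h
      exact complete_of_chain S0_sub S0_acc (h _ S0_sub S0_acc S0_only)
  · constructor
    · intro h
      haveI := h
      exact ⟨_, S0_sub, S0_acc, S0_only, chain_of_complete S0_sub S0_only⟩
    · rintro ⟨S, hSsub, h0, _, hch⟩
      exact complete_of_chain hSsub h0 hch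
end

section
/- Let X be a compact topological space and f : X → X a closed map. Assume that for every x ∈ X with fx ≠ x there is a closed subset B of X with x ∈ B and x ∉ f(B) ⊆ B. Then f has a fixed point. -/
/-- Take a compact space X and a closed map f : X → X. If for every x with fx ≠ x there
is a closed set B with x ∈ B and x ∉ f(B) ⊆ B, then f has a fixed point. -/
theorem fixedPoint_compact_closedMap {X : Type*} [TopologicalSpace X] [CompactSpace X]
    [Nonempty X] (f : X → X) (hf : IsClosedMap f)
    (hyp : ∀ x : X, f x ≠ x →
      ∃ B : Set X, IsClosed B ∧ x ∈ B ∧ x ∉ f '' B ∧ f '' B ⊆ B) :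
    ∃ x : X, f x = x := by
  set S : Set (Set X) := {B | B.Nonempty ∧ IsClosed B ∧ f '' B ⊆ B} with hS
  have hXS : (Set.univ : Set X) ∈ S :=
    ⟨Set.univ_nonempty, isClosed_univ, Set.subset_univ _⟩
  have hzorn : ∀ c ⊆ S, IsChain (· ⊆ ·) c → c.Nonempty →
      ∃ lb ∈ S, ∀ s ∈ c, lb ⊆ s := by
    intro c hcS hchain hcne
    refine ⟨⋂₀ c, ?_, fun s hs => Set.sInter_subset_of_mem hs⟩
    have : Nonempty c := hcne.to_subtype
    have hdir : DirectedOn (· ⊇ ·) c := by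
      intro U hU V hV
      rcases hchain.total hU hV with h | h
      · exact ⟨U, hU, subset_refl U, h⟩
      · exact ⟨V, hV, h, subset_refl V⟩
    refine ⟨IsCompact.nonempty_sInter_of_directed_nonempty_isCompact_isClosed
        hdir (fun U hU => (hcS hU).1)
        (fun U hU => (hcS hU).2.1.isCompact) (fun U hU => (hcS hU).2.1), ?_, ?_⟩
    · exact isClosed_sInter fun U hU => (hcS hU).2.1
    · intro y hy
      rw [Set.mem_sInter]
      intro U hU
      obtain ⟨z, hz, rfl⟩ := hy
      exact (hcS hU).2.2 ⟨z, hz.out U hU, rfl⟩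
  obtain ⟨m, -, hmS, hmin⟩ := zorn_superset_nonempty S hzorn Set.univ hXS
  · obtain ⟨hmne, hmcl, hminv⟩ := hmS
    -- f '' m = m by minimality
    have hfm : f '' m = m := by
      exact Set.Subset.antisymm hminv (hmin ⟨hmne.image f, hf m hmcl, Set.image_mono (f := f) hminv⟩ hminv)
    obtain ⟨x, hx⟩ := hmne
    by_contra h
    push_neg at h
    obtain ⟨B, hBcl, hxB, hxfB, hfB⟩ := hyp x (h x)
    have hmB : m ∩ B ∈ S := by
      refine ⟨⟨x, hx, hxB⟩, hmcl.inter hBcl, ?_⟩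
      refine Set.subset_inter ?_ ?_
      · exact (Set.image_mono (f := f) Set.inter_subset_left).trans hminv
      · exact (Set.image_mono (f := f) Set.inter_subset_right).trans hfB
    have : m ∩ B = m := Set.Subset.antisymm Set.inter_subset_left (hmin hmB Set.inter_subset_left)
    have hmsub : m ⊆ B := by rw [← this]; exact Set.inter_subset_right
    have : x ∈ f '' B := by
      rw [← hfm] at hx
      exact Set.image_mono (f := f) hmsub hx
    exact hxfB this
end

section
/- For a poset (T,≤), the following are equivalent: (a) (T,≤) is chain complete; (b) (T,≤) is directed complete; (c) the ball space of principal final segments [a,∞) is S₅ (the intersection of every nest of such segments is itself a segment [b,∞)); (d) the same for every directed system of segments. -/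
set_option linter.unusedSectionVars false


open Set

namespace ChainCompletePfsAux

variable {T : Type*} [PartialOrder T]

/-- Every finite subset of a nonempty directed set has an upper bound in the set. -/
theorem finite_subset_bound {D : Set T} (hD : DirectedOn (· ≤ ·) D) (hne : D.Nonempty) :
    ∀ S : Set T, S.Finite → S ⊆ D → ∃ m ∈ D, ∀ x ∈ S, x ≤ m := by
  intro S hS
  refine Set.Finite.induction_on (motive := fun S _ => S ⊆ D → ∃ m ∈ D, ∀ x ∈ S, x ≤ m) S hS
    (fun _ => ⟨hne.choose, hne.choose_spec, fun x hx => hx.elim⟩) ?_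
  intro a S ha hSfin IH hsub
  · obtain ⟨m, hmD, hm⟩ := IH (fun x hx => hsub (Set.mem_insert_of_mem a hx))
    obtain ⟨c, hcD, hac, hmc⟩ := hD a (hsub (Set.mem_insert a S)) m hmD
    exact ⟨c, hcD, fun x hx => by
      rcases hx with rfl | hx
      · exact hac
      · exact (hm x hx).trans hmc⟩

/-- Iterated closure under a binary "upper bound" operation. -/
def hullF (u : T → T → T) (S : Set T) : ℕ → Set T
  | 0 => S
  | n + 1 => hullF u S n ∪ Set.image2 u (hullF u S n) (hullF u S n)

def hull (u : T → T → T) (S : Set T) : Set T := ⋃ n, hullF u S n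

theorem hullF_mono_nat (u : T → T → T) (S : Set T) : Monotone (hullF u S) :=
  monotone_nat_of_le_succ fun _ => Set.subset_union_left

theorem subset_hull (u : T → T → T) (S : Set T) : S ⊆ hull u S :=
  Set.subset_iUnion (hullF u S) 0

theorem hull_mono (u : T → T → T) {S S' : Set T} (h : S ⊆ S') : hull u S ⊆ hull u S' := by
  refine Set.iUnion_mono fun n => ?_
  induction n with
  | zero => exact h
  | succ n IH => exact Set.union_subset_union IH (Set.image2_subset IH IH)

variable {D : Set T} {u : T → T → T}
variable (hu : ∀ x ∈ D, ∀ y ∈ D, u x y ∈ D ∧ x ≤ u x y ∧ y ≤ u x y)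

include hu

theorem hullF_subset {S : Set T} (hS : S ⊆ D) : ∀ n, hullF u S n ⊆ D := by
  intro n
  induction n with
  | zero => exact hS
  | succ n IH =>
    refine Set.union_subset IH ?_
    rintro _ ⟨x, hx, y, hy, rfl⟩
    exact (hu x (IH hx) y (IH hy)).1

theorem hull_subset {S : Set T} (hS : S ⊆ D) : hull u S ⊆ D :=
  Set.iUnion_subset (hullF_subset hu hS)

theorem hull_directed {S : Set T} (hS : S ⊆ D) : DirectedOn (· ≤ ·) (hull u S) := by
  rintro x hx y hy
  obtain ⟨m, hxm⟩ := Set.mem_iUnion.mp hx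
  obtain ⟨n, hyn⟩ := Set.mem_iUnion.mp hy
  have hxk : x ∈ hullF u S (max m n) := hullF_mono_nat u S (le_max_left m n) hxm
  have hyk : y ∈ hullF u S (max m n) := hullF_mono_nat u S (le_max_right m n) hyn
  have hmem : u x y ∈ hullF u S (max m n + 1) :=
    Set.mem_union_right _ (Set.mem_image2_of_mem hxk hyk)
  have hxD := hullF_subset hu hS _ hxk
  have hyD := hullF_subset hu hS _ hyk
  exact ⟨u x y, Set.mem_iUnion.mpr ⟨max m n + 1, hmem⟩, (hu x hxD y hyD).2.1, (hu x hxD y hyD).2.2⟩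

omit hu

theorem mk_hull_le (u : T → T → T) (S : Set T) :
    Cardinal.mk (hull u S) ≤ max (Cardinal.mk S) Cardinal.aleph0 := by
  set m := max (Cardinal.mk S) Cardinal.aleph0 with hm
  have hm0 : Cardinal.aleph0 ≤ m := le_max_right _ _
  have hF : ∀ n, Cardinal.mk (hullF u S n) ≤ m := by
    intro n
    induction n with
    | zero => exact le_max_left _ _
    | succ n IH =>
      calc Cardinal.mk (hullF u S (n + 1))
          ≤ Cardinal.mk (hullF u S n) + Cardinal.mk (Set.image2 u (hullF u S n) (hullF u S n)) :=
            Cardinal.mk_union_le _ _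
        _ ≤ m + m * m := add_le_add IH (Cardinal.mk_image2_le.trans (mul_le_mul' IH IH))
        _ = m := by rw [Cardinal.mul_eq_self hm0, Cardinal.add_eq_self hm0]
  have heq : hull u S = ⋃ i : ULift.{_} ℕ, hullF u S i.down := by
    ext x
    simp only [hull, Set.mem_iUnion, ULift.exists]
  rw [heq]
  calc Cardinal.mk (⋃ i : ULift.{_} ℕ, hullF u S i.down)
      ≤ Cardinal.mk (ULift.{_} ℕ) * ⨆ i : ULift.{_} ℕ, Cardinal.mk (hullF u S i.down) :=
        Cardinal.mk_iUnion_le _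
    _ ≤ Cardinal.aleph0 * m :=
        mul_le_mul' Cardinal.mk_le_aleph0 (ciSup_le' fun i => hF i.down)
    _ = m := Cardinal.aleph0_mul_eq hm0

end ChainCompletePfsAux

namespace Step2

variable {T : Type*} [PartialOrder T]

theorem chain_imp_directed
    (hcc : ∀ C : Set T, C.Nonempty → IsChain (· ≤ ·) C → ∃ s, IsLUB C s) :
    ∀ D : Set T, D.Nonempty → DirectedOn (· ≤ ·) D → ∃ s, IsLUB D s := by
  suffices main : ∀ κ : Cardinal, ∀ D : Set T, Cardinal.mk D = κ → D.Nonempty →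
      DirectedOn (· ≤ ·) D → ∃ s, IsLUB D s from
    fun D => main (Cardinal.mk D) D rfl
  intro κ
  induction κ using WellFoundedLT.induction with
  | _ κ IH =>
  intro D hmk hne hdir
  subst hmk
  classical
  have hDne : Nonempty ↥D := hne.to_subtype
  rcases lt_or_ge (Cardinal.mk D) Cardinal.aleph0 with hfin | hinf
  · -- finite case
    have hDfin : D.Finite := Cardinal.lt_aleph0_iff_set_finite.mp hfin
    obtain ⟨m, hmD, hm⟩ := ChainCompletePfsAux.finite_subset_bound hdir hne D hDfin subset_rfl
    exact ⟨m, hm, fun v hv => hv hmD⟩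
  rcases eq_or_lt_of_le hinf with hcnt | hunc
  · -- countable case
    have hcount : D.Countable := Set.countable_coe_iff.mp
      (Cardinal.mk_le_aleph0_iff.mp hcnt.ge)
    obtain ⟨f, hf⟩ := hcount.exists_eq_range hne
    have fD : ∀ n, f n ∈ D := fun n => hf ▸ Set.mem_range_self n
    -- choice of upper bounds
    let g : ↥D → ↥D → ↥D := fun x y =>
      ⟨(hdir x x.2 y y.2).choose, (hdir x x.2 y y.2).choose_spec.1⟩
    have hg1 : ∀ x y : ↥D, (x : T) ≤ g x y := fun x y => (hdir x x.2 y y.2).choose_spec.2.1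
    have hg2 : ∀ x y : ↥D, (y : T) ≤ g x y := fun x y => (hdir x x.2 y y.2).choose_spec.2.2
    let x : ℕ → ↥D := fun n => Nat.rec ⟨f 0, fD 0⟩ (fun n xn => g xn ⟨f (n + 1), fD (n + 1)⟩) n
    have hmono : Monotone (fun n => (x n).1) := by
      refine monotone_nat_of_le_succ fun n => ?_
      exact hg1 (x n) ⟨f (n + 1), fD (n + 1)⟩
    have hfx : ∀ n, f n ≤ (x n).1 := by
      intro n
      cases n with
      | zero => exact le_refl _
      | succ n => exact hg2 (x n) ⟨f (n + 1), fD (n + 1)⟩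
    obtain ⟨s, hs⟩ := hcc (Set.range fun n => (x n).1) (Set.range_nonempty _)
      (fun a ⟨m, hm⟩ b ⟨n, hn⟩ _ => by
        subst hm hn
        rcases le_total m n with h | h
        · exact Or.inl (hmono h)
        · exact Or.inr (hmono h))
    refine ⟨s, fun d hd => ?_, fun v hv => hs.2 ?_⟩
    · rw [hf] at hd
      obtain ⟨n, rfl⟩ := hd
      exact (hfx n).trans (hs.1 ⟨n, rfl⟩)
    · rintro _ ⟨n, rfl⟩
      exact hv (x n).2
  · -- uncountable case
    obtain ⟨r, wo, hord⟩ := Cardinal.ord_eq ↥D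
    -- upper bound choice function
    let u : T → T → T := fun a b =>
      if h : a ∈ D ∧ b ∈ D then (hdir a h.1 b h.2).choose else a
    have hu : ∀ a ∈ D, ∀ b ∈ D, u a b ∈ D ∧ a ≤ u a b ∧ b ≤ u a b := by
      intro a ha b hb
      have : u a b = (hdir a ha b hb).choose := dif_pos ⟨ha, hb⟩
      rw [this]
      exact (hdir a ha b hb).choose_spec
    -- initial segments
    let seg : ↥D → Set T := fun x => Subtype.val '' {y : ↥D | ¬ r x y}
    have hseg_sub : ∀ x, seg x ⊆ D := by
      rintro x _ ⟨y, _, rfl⟩; exact y.2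
    have hseg_self : ∀ x : ↥D, (x : T) ∈ seg x := fun x => ⟨x, irrefl x, rfl⟩
    have hseg_chain : ∀ x y : ↥D, seg x ⊆ seg y ∨ seg y ⊆ seg x := by
      have key : ∀ x y : ↥D, r x y → seg x ⊆ seg y := by
        rintro x y hxy _ ⟨z, hz, rfl⟩
        refine ⟨z, fun hyz => hz (_root_.trans hxy hyz), rfl⟩
      intro x y
      rcases trichotomous_of r x y with h | h | h
      · exact Or.inl (key x y h)
      · exact Or.inl (h ▸ subset_rfl)
      · exact Or.inr (key y x h)
    have hseg_card : ∀ x : ↥D, Cardinal.mk (seg x) < Cardinal.mk D := by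
      intro x
      have h1 : Cardinal.mk (seg x) ≤ Cardinal.mk {y : ↥D | ¬ r x y} := Cardinal.mk_image_le
      have h2 : {y : ↥D | ¬ r x y} ⊆ insert x {y : ↥D | r y x} := by
        intro y hy
        rcases trichotomous_of r y x with h | h | h
        · exact Set.mem_insert_of_mem _ h
        · exact h ▸ Set.mem_insert _ _
        · exact absurd h hy
      have h3 : Cardinal.mk {y : ↥D | r y x} < Cardinal.mk D := by
        have : Cardinal.mk {y : ↥D | r y x} = ((Ordinal.typein r).toRelEmbedding x).card :=
          Ordinal.card_typein x
        rw [this]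
        exact Cardinal.lt_ord.mp (hord ▸ Ordinal.typein_lt_type r x)
      calc Cardinal.mk (seg x) ≤ Cardinal.mk (insert x {y : ↥D | r y x} : Set ↥D) :=
            h1.trans (Cardinal.mk_le_mk_of_subset h2)
        _ ≤ Cardinal.mk {y : ↥D | r y x} + 1 := Cardinal.mk_insert_le
        _ < Cardinal.mk D := Cardinal.add_lt_of_lt hunc.le h3 (Cardinal.one_lt_aleph0.trans hunc)
    -- the directed subsets
    let Dx : ↥D → Set T := fun x => ChainCompletePfsAux.hull u (seg x)
    have hDx_sub : ∀ x, Dx x ⊆ D := fun x => ChainCompletePfsAux.hull_subset hu (hseg_sub x)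
    have hDx_dir : ∀ x, DirectedOn (· ≤ ·) (Dx x) :=
      fun x => ChainCompletePfsAux.hull_directed hu (hseg_sub x)
    have hDx_ne : ∀ x : ↥D, (x : T) ∈ Dx x :=
      fun x => ChainCompletePfsAux.subset_hull u (seg x) (hseg_self x)
    have hDx_card : ∀ x, Cardinal.mk (Dx x) < Cardinal.mk D := by
      intro x
      refine (ChainCompletePfsAux.mk_hull_le u (seg x)).trans_lt ?_
      exact max_lt (hseg_card x) hunc
    have hDx_chain : ∀ x y : ↥D, Dx x ⊆ Dx y ∨ Dx y ⊆ Dx x := by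
      intro x y
      rcases hseg_chain x y with h | h
      · exact Or.inl (ChainCompletePfsAux.hull_mono u h)
      · exact Or.inr (ChainCompletePfsAux.hull_mono u h)
    -- sups of the pieces by induction hypothesis
    have hsx : ∀ x : ↥D, ∃ s, IsLUB (Dx x) s := fun x =>
      IH (Cardinal.mk (Dx x)) (hDx_card x) (Dx x) rfl ⟨x, hDx_ne x⟩ (hDx_dir x)
    choose sx hsxs using hsx
    have hsx_mono : ∀ x y : ↥D, Dx x ⊆ Dx y → sx x ≤ sx y := fun x y h =>
      (hsxs x).2 fun z hz => (hsxs y).1 (h hz)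
    obtain ⟨s, hs⟩ := hcc (Set.range sx) (Set.range_nonempty _)
      (fun a ⟨x, hx⟩ b ⟨y, hy⟩ _ => by
        subst hx hy
        rcases hDx_chain x y with h | h
        · exact Or.inl (hsx_mono x y h)
        · exact Or.inr (hsx_mono y x h))
    refine ⟨s, fun d hd => ?_, fun v hv => hs.2 ?_⟩
    · exact ((hsxs ⟨d, hd⟩).1 (hDx_ne ⟨d, hd⟩)).trans (hs.1 ⟨⟨d, hd⟩, rfl⟩)
    · rintro _ ⟨x, rfl⟩
      exact (hsxs x).2 fun z hz => hv (hDx_sub x hz)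

end Step2

section Final

variable {T : Type*} [PartialOrder T]

private theorem sInter_image_Ici {A : Set T} {s : T} (hs : IsLUB A s) :
    ⋂₀ (Set.Ici '' A) = Set.Ici s := by
  ext x
  simp only [Set.mem_sInter, Set.mem_image, forall_exists_index, and_imp, Set.mem_Ici]
  constructor
  · intro h
    exact hs.2 fun a ha => by have := h (Set.Ici a) a ha rfl; exact this
  · intro hsx t a ha h
    subst h
    exact (hs.1 ha).trans hsx

/-- From the S₅-type property restricted to `Ici '' C`, recover the LUB of a chain/directed set. -/
private theorem lub_of_sInter {C : Set T} {s : T}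
    (h : ⋂₀ (Set.Ici '' C) = Set.Ici s) : IsLUB C s := by
  have key : ∀ x : T, s ≤ x ↔ ∀ a ∈ C, a ≤ x := by
    intro x
    rw [← Set.mem_Ici, ← h]
    simp only [Set.mem_sInter, Set.mem_image, forall_exists_index, and_imp]
    constructor
    · intro hx a ha
      exact hx (Set.Ici a) a ha rfl
    · rintro hx t a ha rfl
      exact hx a ha
  exact ⟨fun a ha => (key s).mp le_rfl a ha, fun v hv => (key v).mpr hv⟩

theorem chainComplete_iff_pfs_S5' {T : Type*} [PartialOrder T] :
    ((∀ C : Set T, C.Nonempty → IsChain (· ≤ ·) C → ∃ s, IsLUB C s) ↔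
     (∀ D : Set T, D.Nonempty → DirectedOn (· ≤ ·) D → ∃ s, IsLUB D s)) ∧
    ((∀ C : Set T, C.Nonempty → IsChain (· ≤ ·) C → ∃ s, IsLUB C s) ↔
     (∀ N ⊆ {b : Set T | ∃ a : T, b = Set.Ici a}, N.Nonempty → IsChain (· ⊆ ·) N →
        ⋂₀ N ∈ {b : Set T | ∃ a : T, b = Set.Ici a})) ∧
    ((∀ C : Set T, C.Nonempty → IsChain (· ≤ ·) C → ∃ s, IsLUB C s) ↔
     (∀ D ⊆ {b : Set T | ∃ a : T, b = Set.Ici a}, D.Nonempty →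
        (∀ b₁ ∈ D, ∀ b₂ ∈ D, ∃ b ∈ D, b ⊆ b₁ ∩ b₂) →
        ⋂₀ D ∈ {b : Set T | ∃ a : T, b = Set.Ici a})) := by
  have h1 : (∀ C : Set T, C.Nonempty → IsChain (· ≤ ·) C → ∃ s, IsLUB C s) ↔
      (∀ D : Set T, D.Nonempty → DirectedOn (· ≤ ·) D → ∃ s, IsLUB D s) :=
    ⟨Step2.chain_imp_directed, fun hd C hne hC => hd C hne hC.directedOn⟩
  refine ⟨h1, ?_, ?_⟩
  · -- chain complete ↔ S₅ for nests
    constructor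
    · intro hcc N hNsub hNne hNchain
      -- generators
      set A : Set T := {a | Set.Ici a ∈ N} with hA
      have hNA : N = Set.Ici '' A := by
        ext b
        constructor
        · intro hb
          obtain ⟨a, rfl⟩ := hNsub hb
          exact ⟨a, hb, rfl⟩
        · rintro ⟨a, ha, rfl⟩
          exact ha
      have hAne : A.Nonempty := by
        obtain ⟨b, hb⟩ := hNne
        obtain ⟨a, rfl⟩ := hNsub hb
        exact ⟨a, hb⟩
      have hAchain : IsChain (· ≤ ·) A := by
        intro a₁ h₁ a₂ h₂ hne
        have := hNchain h₁ h₂ (fun h => hne (Set.Ici_injective h))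
        rcases this with h | h
        · exact Or.inr (Set.Ici_subset_Ici.mp h)
        · exact Or.inl (Set.Ici_subset_Ici.mp h)
      obtain ⟨s, hs⟩ := hcc A hAne hAchain
      exact ⟨s, by rw [hNA, sInter_image_Ici hs]⟩
    · intro hS C hCne hCchain
      have hsub : Set.Ici '' C ⊆ {b : Set T | ∃ a : T, b = Set.Ici a} := by
        rintro _ ⟨a, _, rfl⟩; exact ⟨a, rfl⟩
      have hchain : IsChain (· ⊆ ·) (Set.Ici '' C) := by
        rintro _ ⟨a, ha, rfl⟩ _ ⟨b, hb, rfl⟩ hne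
        rcases eq_or_ne a b with rfl | hab
        · exact absurd rfl hne
        rcases hCchain ha hb hab with h | h
        · exact Or.inr (Set.Ici_subset_Ici.mpr h)
        · exact Or.inl (Set.Ici_subset_Ici.mpr h)
      obtain ⟨s, hs⟩ := hS (Set.Ici '' C) hsub (hCne.image _) hchain
      exact ⟨s, lub_of_sInter hs⟩
  · -- chain complete ↔ S₅ᵈ for directed systems
    constructor
    · intro hcc B hBsub hBne hBdir
      have hdc := h1.mp hcc
      set A : Set T := {a | Set.Ici a ∈ B} with hA
      have hBA : B = Set.Ici '' A := by
        ext b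
        constructor
        · intro hb
          obtain ⟨a, rfl⟩ := hBsub hb
          exact ⟨a, hb, rfl⟩
        · rintro ⟨a, ha, rfl⟩
          exact ha
      have hAne : A.Nonempty := by
        obtain ⟨b, hb⟩ := hBne
        obtain ⟨a, rfl⟩ := hBsub hb
        exact ⟨a, hb⟩
      have hAdir : DirectedOn (· ≤ ·) A := by
        intro a₁ h₁ a₂ h₂
        obtain ⟨b, hbB, hbsub⟩ := hBdir _ h₁ _ h₂
        obtain ⟨c, rfl⟩ := hBsub hbB
        have hc : c ∈ Set.Ici a₁ ∩ Set.Ici a₂ := hbsub Set.self_mem_Ici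
        exact ⟨c, hbB, hc.1, hc.2⟩
      obtain ⟨s, hs⟩ := hdc A hAne hAdir
      exact ⟨s, by rw [hBA, sInter_image_Ici hs]⟩
    · intro hS C hCne hCchain
      have hsub : Set.Ici '' C ⊆ {b : Set T | ∃ a : T, b = Set.Ici a} := by
        rintro _ ⟨a, _, rfl⟩; exact ⟨a, rfl⟩
      have hdir : ∀ b₁ ∈ Set.Ici '' C, ∀ b₂ ∈ Set.Ici '' C,
          ∃ b ∈ Set.Ici '' C, b ⊆ b₁ ∩ b₂ := by
        rintro _ ⟨a, ha, rfl⟩ _ ⟨b, hb, rfl⟩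
        rcases eq_or_ne a b with rfl | hab
        · exact ⟨Set.Ici a, ⟨a, ha, rfl⟩, by simp⟩
        rcases hCchain ha hb hab with h | h
        · exact ⟨Set.Ici b, ⟨b, hb, rfl⟩,
            Set.subset_inter (Set.Ici_subset_Ici.mpr h) subset_rfl⟩
        · exact ⟨Set.Ici a, ⟨a, ha, rfl⟩,
            Set.subset_inter subset_rfl (Set.Ici_subset_Ici.mpr h)⟩
      obtain ⟨s, hs⟩ := hS (Set.Ici '' C) hsub (hCne.image _) hdir
      exact ⟨s, lub_of_sInter hs⟩

end Final



/-- For a poset (T,≤) the following are equivalent: chain complete, directed complete,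
the ball space of principal final segments is S₅, and it is S₅ᵈ. -/
theorem chainComplete_iff_pfs_S5 {T : Type*} [PartialOrder T] :
    ((∀ C : Set T, C.Nonempty → IsChain (· ≤ ·) C → ∃ s, IsLUB C s) ↔
     (∀ D : Set T, D.Nonempty → DirectedOn (· ≤ ·) D → ∃ s, IsLUB D s)) ∧
    ((∀ C : Set T, C.Nonempty → IsChain (· ≤ ·) C → ∃ s, IsLUB C s) ↔
     (∀ N ⊆ {b : Set T | ∃ a : T, b = Set.Ici a}, N.Nonempty → IsChain (· ⊆ ·) N →
        ⋂₀ N ∈ {b : Set T | ∃ a : T, b = Set.Ici a})) ∧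
    ((∀ C : Set T, C.Nonempty → IsChain (· ≤ ·) C → ∃ s, IsLUB C s) ↔
     (∀ D ⊆ {b : Set T | ∃ a : T, b = Set.Ici a}, D.Nonempty →
        (∀ b₁ ∈ D, ∀ b₂ ∈ D, ∃ b ∈ D, b ⊆ b₁ ∩ b₂) →
        ⋂₀ D ∈ {b : Set T | ∃ a : T, b = Set.Ici a})) := by
  exact chainComplete_iff_pfs_S5'
end

section
/- If (X,𝓑) is an S₁ᶜ ball space (every centered system of balls has nonempty intersection), then the ball space obtained by closing 𝓑 under finite unions is also S₁ᶜ. -/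
/-- If (X,𝓑) is an S₁ᶜ ball space, then the ball space obtained by closing 𝓑 under
finite unions is also S₁ᶜ. -/
theorem finiteUnions_S1c {X : Type*} [Nonempty X] (B : Set (Set X))
    (hBne : B.Nonempty) (hballs : ∀ b ∈ B, b.Nonempty)
    (hS1c : ∀ C ⊆ B, C.Nonempty →
      (∀ F : Finset (Set X), ↑F ⊆ C → F.Nonempty → (⋂₀ (F : Set (Set X))).Nonempty) →
      (⋂₀ C).Nonempty) :
    ∀ C ⊆ {u : Set X | ∃ S : Set (Set X), S.Finite ∧ S.Nonempty ∧ S ⊆ B ∧ u = ⋃₀ S},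
      C.Nonempty →
      (∀ F : Finset (Set X), ↑F ⊆ C → F.Nonempty → (⋂₀ (F : Set (Set X))).Nonempty) →
      (⋂₀ C).Nonempty := by
  classical
  intro C hCsub hCne hCcent
  set FU : Set (Set X) :=
    {u : Set X | ∃ S : Set (Set X), S.Finite ∧ S.Nonempty ∧ S ⊆ B ∧ u = ⋃₀ S} with hFU
  have hBsubFU : B ⊆ FU := by
    intro b hb
    exact ⟨{b}, Set.finite_singleton b, Set.singleton_nonempty b,
      Set.singleton_subset_iff.2 hb, by simp⟩
  -- the poset of centered systems extending C inside FU
  set P : Set (Set (Set X)) :=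
    {D | C ⊆ D ∧ D ⊆ FU ∧
      ∀ F : Finset (Set X), ↑F ⊆ D → F.Nonempty → (⋂₀ (F : Set (Set X))).Nonempty} with hP
  have hCP : C ∈ P := ⟨subset_rfl, hCsub, hCcent⟩
  obtain ⟨M, hCM, hMmax⟩ := zorn_subset_nonempty P (fun c hcP hchain hcne => by
    refine ⟨⋃₀ c, ⟨?_, ?_, ?_⟩, fun s hs => Set.subset_sUnion_of_mem hs⟩
    · obtain ⟨D, hD⟩ := hcne
      exact (hcP hD).1.trans (Set.subset_sUnion_of_mem hD)
    · exact Set.sUnion_subset fun D hD => (hcP hD).2.1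
    · intro F hF hFne
      have hdir : DirectedOn (fun i j : Set (Set X) => i ⊆ j) c := by
        intro x hx y hy
        rcases hchain.total hx hy with h | h
        · exact ⟨y, hy, h, subset_rfl⟩
        · exact ⟨x, hx, subset_rfl, h⟩
      have : (F : Set (Set X)) ⊆ ⋃ D ∈ c, D := by
        simpa [Set.sUnion_eq_biUnion] using hF
      obtain ⟨D, hDc, hFD⟩ :=
        DirectedOn.exists_mem_subset_of_finset_subset_biUnion hcne hdir this
      exact (hcP hDc).2.2 F hFD hFne) C hCP
  obtain ⟨hCM', hMFU, hMcent⟩ := hMmax.prop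
  -- key claim: every element of M contains a ball of B that lies in M
  have key : ∀ u ∈ M, ∃ b ∈ B, b ∈ M ∧ b ⊆ u := by
    intro u huM
    obtain ⟨S, hSfin, hSne, hSB, rfl⟩ := hMFU huM
    by_contra hcon
    push_neg at hcon
    have hbnotM : ∀ b ∈ S, b ∉ M := by
      intro b hbS hbM
      exact hcon b (hSB hbS) hbM (Set.subset_sUnion_of_mem hbS)
    -- for each b ∈ S there is a finite G ⊆ M with ⋂₀ G ∩ b = ∅
    have hsep : ∀ b ∈ S, ∃ G : Finset (Set X), ↑G ⊆ M ∧ (⋂₀ (G : Set (Set X))) ∩ b = ∅ := by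
      intro b hbS
      have hnotP : insert b M ∉ P := by
        intro hin
        have : insert b M = M :=
          hMmax.eq_of_subset hin (Set.subset_insert b M) ▸ rfl
        have := hMmax.eq_of_ge hin (Set.subset_insert b M)
        exact hbnotM b hbS (this ▸ Set.mem_insert b M)
      have hnotcent : ¬ ∀ F : Finset (Set X), ↑F ⊆ insert b M → F.Nonempty →
          (⋂₀ (F : Set (Set X))).Nonempty := by
        intro hc
        exact hnotP ⟨hCM'.trans (Set.subset_insert b M),
          Set.insert_subset (hBsubFU (hSB hbS)) hMFU, hc⟩
      push_neg at hnotcent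
      obtain ⟨F, hFsub, hFne, hFempty⟩ := hnotcent
      refine ⟨F.erase b, ?_, ?_⟩
      · intro x hx
        simp only [Finset.coe_erase, Set.mem_diff, Set.mem_singleton_iff] at hx
        rcases hFsub hx.1 with h | h
        · exact absurd h hx.2
        · exact h
      · rw [← Set.subset_empty_iff, ← hFempty]
        intro x ⟨hx1, hx2⟩
        intro t ht
        rcases eq_or_ne t b with rfl | hne
        · exact hx2
        · exact hx1 t (by simp [Finset.mem_erase, hne, ht])
    choose G hGM hGb using hsep
    -- build a big finset contradicting centeredness of M
    set Gfun : Set X → Finset (Set X) := fun b => if h : b ∈ S then G b h else ∅ with hGfun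
    set BigF : Finset (Set X) := insert (⋃₀ S) (hSfin.toFinset.biUnion Gfun) with hBigF
    have hBigsub : ↑BigF ⊆ M := by
      intro t ht
      simp only [hBigF, Finset.coe_insert, Set.mem_insert_iff, Finset.coe_biUnion,
        Set.mem_iUnion, Finset.mem_coe] at ht
      rcases ht with rfl | ⟨b, hb, htb⟩
      · exact huM
      · have hbS : b ∈ S := by simpa using (hSfin.mem_toFinset.mp (by simpa using hb))
        have : Gfun b = G b hbS := by simp [hGfun, hbS]
        exact hGM b hbS (by rwa [this] at htb)
    have hBigne : BigF.Nonempty := ⟨⋃₀ S, Finset.mem_insert_self _ _⟩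
    obtain ⟨x, hx⟩ := hMcent BigF hBigsub hBigne
    have hxu : x ∈ ⋃₀ S := hx (⋃₀ S) (by simp [hBigF])
    obtain ⟨b, hbS, hxb⟩ := hxu
    have hxG : x ∈ ⋂₀ (G b hbS : Set (Set X)) := by
      intro t ht
      refine hx t ?_
      simp only [hBigF, Finset.coe_insert, Set.mem_insert_iff, Finset.coe_biUnion,
        Set.mem_iUnion, Finset.mem_coe]
      exact Or.inr ⟨b, by simpa using hSfin.mem_toFinset.mpr hbS,
        by simpa [hGfun, hbS] using ht⟩
    have : x ∈ (⋂₀ (G b hbS : Set (Set X))) ∩ b := ⟨hxG, hxb⟩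
    rw [hGb b hbS] at this
    exact this
  -- M ∩ B is a centered system of balls
  have hMBne : (M ∩ B).Nonempty := by
    obtain ⟨u, huC⟩ := hCne
    obtain ⟨b, hbB, hbM, _⟩ := key u (hCM huC)
    exact ⟨b, hbM, hbB⟩
  have hMBcent : ∀ F : Finset (Set X), ↑F ⊆ M ∩ B → F.Nonempty →
      (⋂₀ (F : Set (Set X))).Nonempty := fun F hF hFne =>
    hMcent F (hF.trans Set.inter_subset_left) hFne
  obtain ⟨x, hx⟩ := hS1c (M ∩ B) Set.inter_subset_right hMBne hMBcent
  refine ⟨x, fun u huC => ?_⟩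
  obtain ⟨b, hbB, hbM, hbu⟩ := key u (hCM huC)
  exact hbu (hx b ⟨hbM, hbB⟩)
end

section
/- Given a family of ball spaces (X_j, 𝓑_j), j ∈ J, the box product (∏X_j, {∏B_j : B_j ∈ 𝓑_j for all j}) is spherically complete if and only if each (X_j, 𝓑_j) is spherically complete. -/
/-- The box product of a family of ball spaces is spherically complete if and only if
each factor is spherically complete. -/
theorem boxProduct_sphericallyComplete {J : Type*} (X : J → Type*)
    [∀ j, Nonempty (X j)] (B : ∀ j, Set (Set (X j)))
    (hBne : ∀ j, (B j).Nonempty) (hballs : ∀ j, ∀ b ∈ B j, b.Nonempty) :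
    (∀ N ⊆ {b : Set (∀ j, X j) |
          ∃ c : ∀ j, Set (X j), (∀ j, c j ∈ B j) ∧ b = Set.pi Set.univ c},
        N.Nonempty → IsChain (· ⊆ ·) N → (⋂₀ N).Nonempty) ↔
    (∀ j, ∀ N ⊆ B j, N.Nonempty → IsChain (· ⊆ ·) N → (⋂₀ N).Nonempty) := by
  classical
  constructor
  · intro h j N hN hNne hNchain
    set c₀ : ∀ k, Set (X k) := fun k => (hBne k).choose with hc₀
    have hc₀mem : ∀ k, c₀ k ∈ B k := fun k => (hBne k).choose_spec
    set f : Set (X j) → Set (∀ k, X k) :=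
      fun b => Set.pi Set.univ (Function.update c₀ j b) with hf
    have hmono : ∀ b b' : Set (X j), b ⊆ b' → f b ⊆ f b' := by
      intro b b' hbb
      apply Set.pi_mono
      intro k _
      rcases eq_or_ne k j with rfl | hk
      · simpa using hbb
      · simp [Function.update_of_ne hk]
    have hsub : f '' N ⊆ {b : Set (∀ j, X j) |
          ∃ c : ∀ j, Set (X j), (∀ j, c j ∈ B j) ∧ b = Set.pi Set.univ c} := by
      rintro _ ⟨b, hb, rfl⟩
      refine ⟨Function.update c₀ j b, fun k => ?_, rfl⟩
      rcases eq_or_ne k j with rfl | hk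
      · simpa using hN hb
      · simpa [Function.update_of_ne hk] using hc₀mem k
    obtain ⟨x, hx⟩ := h (f '' N) hsub (hNne.image f)
      (hNchain.image_of_map_rel (· ⊆ ·) (· ⊆ ·) f (fun _ _ => hmono _ _))
    refine ⟨x j, ?_⟩
    intro b hb
    have := hx (f b) ⟨b, hb, rfl⟩
    simpa using this j (Set.mem_univ j)
  · intro h N hN hNne hNchain
    choose c hc1 hc2 using fun b (hb : b ∈ N) => hN hb
    have key : ∀ j, (⋂₀ {s | ∃ b, ∃ hb : b ∈ N, s = c b hb j}).Nonempty := by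
      intro j
      apply h j
      · rintro _ ⟨b, hb, rfl⟩; exact hc1 b hb j
      · obtain ⟨b, hb⟩ := hNne; exact ⟨c b hb j, b, hb, rfl⟩
      · rintro _ ⟨b, hb, rfl⟩ _ ⟨b', hb', rfl⟩ hne
        rcases eq_or_ne b b' with rfl | hbb
        · exact absurd rfl hne
        rcases hNchain hb hb' hbb with hsub | hsub
        · left
          have : Set.pi Set.univ (c b hb) ⊆ Set.pi Set.univ (c b' hb') := by
            rw [← hc2 b hb, ← hc2 b' hb']; exact hsub
          rcases (Set.univ_pi_subset_univ_pi_iff).mp this with h' | ⟨i, hi⟩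
          · exact h' j
          · exact absurd hi (hballs i _ (hc1 b hb i)).ne_empty
        · right
          have : Set.pi Set.univ (c b' hb') ⊆ Set.pi Set.univ (c b hb) := by
            rw [← hc2 b hb, ← hc2 b' hb']; exact hsub
          rcases (Set.univ_pi_subset_univ_pi_iff).mp this with h' | ⟨i, hi⟩
          · exact h' j
          · exact absurd hi (hballs i _ (hc1 b' hb' i)).ne_empty
    choose x hx using key
    refine ⟨x, ?_⟩
    intro b hb
    rw [hc2 b hb]
    intro j _
    exact hx j _ ⟨b, hb, rfl⟩
end
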